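/- arXiv:2106.15382 — 6 statements merged into one kernel-verified Lean document; each statement's English description precedes it below -/
import Mathlib

section
/- Let H be a real N×M matrix, and let P ∈ ℝ^{N×K}, Q ∈ ℝ^{M×K} satisfy the joint orthogonality constraint PᵀP + QᵀQ = I_K. Then the maximum of tr(PᵀHQ) over all such (P,Q) equals half the sum of the K largest singular values of H, and it is attained at P = (√2/2)U₁, Q = (√2/2)V₁, where U₁ and V₁ consist of the leading K left and right singular vectors of H. -/
open Matrix Finset


lemma contract_aux {ι κ : Type*} [Fintype ι] [Fintype κ] [DecidableEq κ]
    (C : Matrix ι κ ℝ) (hC : Cᵀ * C = 1) (x : ι → ℝ) :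
    ∑ k, ((Cᵀ *ᵥ x) k) ^ 2 ≤ ∑ r, (x r) ^ 2 := by
  set y := Cᵀ *ᵥ x with hy
  set z := C *ᵥ y with hz
  have h1 : ∑ k, y k ^ 2 = y ⬝ᵥ y := by simp [dotProduct, sq]
  have h2 : y ⬝ᵥ y = ∑ r, z r * x r := by
    calc y ⬝ᵥ y = (Cᵀ *ᵥ x) ⬝ᵥ y := by rw [hy]
    _ = (x ᵥ* C) ⬝ᵥ y := by rw [Matrix.mulVec_transpose]
    _ = x ⬝ᵥ (C *ᵥ y) := (Matrix.dotProduct_mulVec x C y).symm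
    _ = ∑ r, z r * x r := by rw [← hz, dotProduct_comm]; rfl
  have h3 : ∑ r, z r ^ 2 = y ⬝ᵥ y := by
    have : z ⬝ᵥ z = y ⬝ᵥ y := by
      calc z ⬝ᵥ z = (C *ᵥ y) ⬝ᵥ (C *ᵥ y) := by rw [hz]
      _ = ((C *ᵥ y) ᵥ* C) ⬝ᵥ y := Matrix.dotProduct_mulVec _ C y
      _ = (Cᵀ *ᵥ (C *ᵥ y)) ⬝ᵥ y := by rw [Matrix.mulVec_transpose]
      _ = ((Cᵀ * C) *ᵥ y) ⬝ᵥ y := by rw [Matrix.mulVec_mulVec]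
      _ = y ⬝ᵥ y := by rw [hC, Matrix.one_mulVec]
    simpa [dotProduct, sq] using this
  have hcs := Finset.sum_mul_sq_le_sq_mul_sq Finset.univ z x
  have hs : (0:ℝ) ≤ ∑ k, y k ^ 2 := Finset.sum_nonneg fun _ _ => sq_nonneg _
  rw [h1, h2]
  nlinarith [hcs, h3, h1, h2, hs, Finset.sum_nonneg (fun r (_ : r ∈ Finset.univ) => sq_nonneg (x r))]

lemma comb (σ : ℕ → ℝ) (hσ : ∀ i, 0 ≤ σ i) (hmono : ∀ i j : ℕ, i ≤ j → σ j ≤ σ i)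
    (K N : ℕ) (hKN : K ≤ N) (d : ℕ → ℝ) (hd0 : ∀ n, 0 ≤ d n) (hd1 : ∀ n, d n ≤ 1/2)
    (hsum : ∑ n ∈ Finset.range N, d n ≤ K/2) :
    ∑ n ∈ Finset.range N, σ n * d n ≤ (∑ n ∈ Finset.range K, σ n)/2 := by
  have split : ∑ n ∈ Finset.range N, σ n * d n
      = (∑ n ∈ Finset.range N, (σ n - σ K) * d n) + σ K * ∑ n ∈ Finset.range N, d n := by
    rw [Finset.mul_sum, ← Finset.sum_add_distrib]
    exact Finset.sum_congr rfl fun n _ => by ring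
  have step1 : ∑ n ∈ Finset.range N, (σ n - σ K) * d n
      ≤ ∑ n ∈ Finset.range N, (if n < K then (σ n - σ K) * (1/2) else 0) := by
    refine Finset.sum_le_sum fun n _ => ?_
    by_cases h : n < K
    · simp only [h, if_true]
      have : 0 ≤ σ n - σ K := sub_nonneg.2 (hmono n K h.le)
      nlinarith [hd1 n, hd0 n]
    · simp only [h, if_false]
      have : σ n - σ K ≤ 0 := sub_nonpos.2 (hmono K n (not_lt.1 h))
      nlinarith [hd0 n]
  have step2 : ∑ n ∈ Finset.range N, (if n < K then (σ n - σ K) * (1/2) else 0)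
      = ∑ n ∈ Finset.range K, (σ n - σ K) * (1/2) := by
    rw [← Finset.sum_subset (Finset.range_subset_range.2 hKN)]
    · exact Finset.sum_congr rfl fun n hn => by
        simp [Finset.mem_range.1 hn]
    · intro n _ hn
      have : ¬ n < K := fun h => hn (Finset.mem_range.2 h)
      simp [this]
  have step3 : ∑ n ∈ Finset.range K, (σ n - σ K) * (1/2)
      = (∑ n ∈ Finset.range K, σ n)/2 - K * σ K / 2 := by
    rw [Finset.sum_congr rfl (fun n _ => by ring : ∀ n ∈ Finset.range K, (σ n - σ K) * (1/2) = σ n * (1/2) - σ K * (1/2))]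
    rw [Finset.sum_sub_distrib, ← Finset.sum_mul, Finset.sum_const, Finset.card_range]
    ring
  have hσK := hσ K
  have : σ K * ∑ n ∈ Finset.range N, d n ≤ σ K * (K/2) :=
    mul_le_mul_of_nonneg_left hsum hσK
  rw [split]
  calc _ ≤ ((∑ n ∈ Finset.range K, σ n)/2 - K * σ K / 2) + σ K * (K/2) := by
        rw [← step3, ← step2]; exact add_le_add step1 this
  _ = (∑ n ∈ Finset.range K, σ n)/2 := by ring


/-- for H ∈ ℝ^{N×M} with SVD H = U Σ Vᵀ (singular values σ₀ ≥ σ₁ ≥ ...)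
and K ≤ min(N,M), the maximum of tr(PᵀHQ) over PᵀP + QᵀQ = I_K is half the sum of
the K largest singular values of H, attained at P = (√2/2)U₁, Q = (√2/2)V₁, where
U₁, V₁ are the leading K left and right singular vectors. -/
theorem max_trace_joint_orthogonal
    (N M K : ℕ) (hKN : K ≤ N) (hKM : K ≤ M)
    (H : Matrix (Fin N) (Fin M) ℝ)
    (U : Matrix (Fin N) (Fin N) ℝ) (hU : Uᵀ * U = 1) (hU' : U * Uᵀ = 1)
    (V : Matrix (Fin M) (Fin M) ℝ) (hV : Vᵀ * V = 1) (hV' : V * Vᵀ = 1)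
    (σ : ℕ → ℝ) (hσ : ∀ i, 0 ≤ σ i) (hσmono : ∀ i j : ℕ, i ≤ j → σ j ≤ σ i)
    (hH : H = U * (Matrix.of fun (i : Fin N) (j : Fin M) =>
      if (i : ℕ) = (j : ℕ) then σ (i : ℕ) else 0) * Vᵀ) :
    let U₁ : Matrix (Fin N) (Fin K) ℝ := U.submatrix id (Fin.castLE hKN)
    let V₁ : Matrix (Fin M) (Fin K) ℝ := V.submatrix id (Fin.castLE hKM)
    IsGreatest {t : ℝ | ∃ (P : Matrix (Fin N) (Fin K) ℝ) (Q : Matrix (Fin M) (Fin K) ℝ),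
        Pᵀ * P + Qᵀ * Q = 1 ∧ t = (Pᵀ * H * Q).trace}
      ((∑ k : Fin K, σ (k : ℕ)) / 2) ∧
    -- the maximum is attained at P = (√2/2)U₁, Q = (√2/2)V₁
    ((Real.sqrt 2 / 2) • U₁)ᵀ * ((Real.sqrt 2 / 2) • U₁) +
        ((Real.sqrt 2 / 2) • V₁)ᵀ * ((Real.sqrt 2 / 2) • V₁) = 1 ∧
    ((((Real.sqrt 2 / 2) • U₁)ᵀ * H * ((Real.sqrt 2 / 2) • V₁)).trace =
      (∑ k : Fin K, σ (k : ℕ)) / 2) := by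
  intro U₁ V₁
  set S : Matrix (Fin N) (Fin M) ℝ := Matrix.of fun (i : Fin N) (j : Fin M) =>
      if (i : ℕ) = (j : ℕ) then σ (i : ℕ) else 0 with hSdef
  set c : ℝ := Real.sqrt 2 / 2 with hcdef
  have hc2 : c * c = 1/2 := by
    rw [hcdef, div_mul_div_comm, Real.mul_self_sqrt (by norm_num)]; norm_num
  -- orthogonality of the scaled point
  have hU₁ : U₁ᵀ * U₁ = 1 := by
    show (U.submatrix id (Fin.castLE hKN))ᵀ * U.submatrix id (Fin.castLE hKN) = 1
    rw [Matrix.transpose_submatrix, ← Matrix.submatrix_mul Uᵀ U (Fin.castLE hKN) id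
      (Fin.castLE hKN) Function.bijective_id, hU,
      Matrix.submatrix_one _ (Fin.castLE_injective hKN)]
  have hV₁ : V₁ᵀ * V₁ = 1 := by
    show (V.submatrix id (Fin.castLE hKM))ᵀ * V.submatrix id (Fin.castLE hKM) = 1
    rw [Matrix.transpose_submatrix, ← Matrix.submatrix_mul Vᵀ V (Fin.castLE hKM) id
      (Fin.castLE hKM) Function.bijective_id, hV,
      Matrix.submatrix_one _ (Fin.castLE_injective hKM)]
  have horth : (c • U₁)ᵀ * (c • U₁) + (c • V₁)ᵀ * (c • V₁) = 1 := by
    rw [Matrix.transpose_smul, Matrix.transpose_smul, Matrix.smul_mul, Matrix.smul_mul,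
      Matrix.mul_smul, Matrix.mul_smul, hU₁, hV₁, smul_smul, hc2, ← add_smul]
    norm_num
  -- trace at the optimum
  have hU₁H : U₁ᵀ * H * V₁ = S.submatrix (Fin.castLE hKN) (Fin.castLE hKM) := by
    show (U.submatrix id (Fin.castLE hKN))ᵀ * H * V.submatrix id (Fin.castLE hKM) = _
    rw [Matrix.transpose_submatrix, hH]
    have e1 : (Uᵀ).submatrix (Fin.castLE hKN) id * (U * S * Vᵀ)
        = (Uᵀ * (U * S * Vᵀ)).submatrix (Fin.castLE hKN) id := by
      rw [Matrix.submatrix_mul Uᵀ (U * S * Vᵀ) (Fin.castLE hKN) id id Function.bijective_id,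
        Matrix.submatrix_id_id]
    rw [e1]
    have e2 : Uᵀ * (U * S * Vᵀ) = S * Vᵀ := by
      rw [← Matrix.mul_assoc, ← Matrix.mul_assoc, hU, Matrix.one_mul]
    rw [e2, ← Matrix.submatrix_mul (S * Vᵀ) V (Fin.castLE hKN) id (Fin.castLE hKM)
        Function.bijective_id, Matrix.mul_assoc, hV, Matrix.mul_one]
  have htrUV : (U₁ᵀ * H * V₁).trace = ∑ k : Fin K, σ (k : ℕ) := by
    rw [hU₁H]
    simp [Matrix.trace, Matrix.diag, Matrix.submatrix_apply, hSdef]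
  have htropt : ((c • U₁)ᵀ * H * (c • V₁)).trace = (∑ k : Fin K, σ (k : ℕ)) / 2 := by
    rw [Matrix.transpose_smul, Matrix.smul_mul, Matrix.smul_mul, Matrix.mul_smul,
      smul_smul, hc2, Matrix.trace_smul, htrUV, smul_eq_mul]
    ring
  -- upper bound
  have hub : ∀ (P : Matrix (Fin N) (Fin K) ℝ) (Q : Matrix (Fin M) (Fin K) ℝ),
      Pᵀ * P + Qᵀ * Q = 1 → (Pᵀ * H * Q).trace ≤ (∑ k : Fin K, σ (k : ℕ)) / 2 := by
    intro P Q hPQ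
    set A : Matrix (Fin N) (Fin K) ℝ := Uᵀ * P with hAdef
    set B : Matrix (Fin M) (Fin K) ℝ := Vᵀ * Q with hBdef
    have hAA : Aᵀ * A = Pᵀ * P := by
      rw [hAdef, Matrix.transpose_mul, Matrix.transpose_transpose, Matrix.mul_assoc,
        ← Matrix.mul_assoc U, hU', Matrix.one_mul]
    have hBB : Bᵀ * B = Qᵀ * Q := by
      rw [hBdef, Matrix.transpose_mul, Matrix.transpose_transpose, Matrix.mul_assoc,
        ← Matrix.mul_assoc V, hV', Matrix.one_mul]
    have hAB : Aᵀ * A + Bᵀ * B = 1 := by rw [hAA, hBB, hPQ]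
    have hPHQ : Pᵀ * H * Q = Aᵀ * (S * B) := by
      rw [hH, hAdef, hBdef, Matrix.transpose_mul, Matrix.transpose_transpose]
      simp only [Matrix.mul_assoc]
    -- the entries of S * B
    have hSB : ∀ (i : Fin N) (k : Fin K), (∑ j : Fin M, S i j * B j k) =
        if h : (i : ℕ) < M then σ (i : ℕ) * B ⟨(i : ℕ), h⟩ k else 0 := by
      intro i k
      split
      · next h =>
        rw [Finset.sum_eq_single (⟨(i : ℕ), h⟩ : Fin M)]
        · simp [hSdef]
        · intro j _ hj
          have : (i : ℕ) ≠ (j : ℕ) := fun hc => hj (by ext; exact hc.symm)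
          simp [hSdef, this]
        · simp
      · next h =>
        apply Finset.sum_eq_zero
        intro j _
        have : (i : ℕ) ≠ (j : ℕ) := fun hc => h (hc ▸ j.isLt)
        simp [hSdef, this]
    set cc : ℕ → ℝ := fun n =>
      if h : n < N ∧ n < M then ∑ k : Fin K, A ⟨n, h.1⟩ k * B ⟨n, h.2⟩ k else 0 with hccdef
    have htr : (Pᵀ * H * Q).trace = ∑ n ∈ Finset.range N, σ n * cc n := by
      rw [hPHQ, ← Fin.sum_univ_eq_sum_range (fun n => σ n * cc n) N]
      rw [Matrix.trace]
      simp only [Matrix.diag, Matrix.mul_apply, Matrix.transpose_apply]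
      rw [Finset.sum_comm]
      refine Finset.sum_congr rfl fun i _ => ?_
      by_cases h : (i : ℕ) < M
      · have hcc : cc (i : ℕ) = ∑ k : Fin K, A i k * B ⟨(i : ℕ), h⟩ k := by
          rw [hccdef]
          simp only [i.isLt, h, and_true, true_and, dif_pos]
        rw [hcc, Finset.mul_sum]
        refine Finset.sum_congr rfl fun k _ => ?_
        rw [hSB i k, dif_pos h]
        ring
      · have hcc : cc (i : ℕ) = 0 := by rw [hccdef]; simp [h]
        rw [hcc, mul_zero]
        apply Finset.sum_eq_zero
        intro k _
        rw [hSB i k, dif_neg h, mul_zero]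
    -- the stacked matrix
    set C : Matrix (Fin N ⊕ Fin M) (Fin K) ℝ := Matrix.of (Sum.elim A B) with hCdef
    have hCC : Cᵀ * C = 1 := by
      ext k l
      have h := congrFun (congrFun hAB k) l
      simp only [Matrix.add_apply, Matrix.mul_apply, Matrix.transpose_apply] at h ⊢
      rw [Fintype.sum_sum_type]
      exact h
    have hquad := contract_aux C hCC
    -- pointwise bound cc n ≤ 1/2, and cc n ≤ (e+f)/2
    have hAMGM : ∀ (i : Fin N) (j : Fin M), ∑ k : Fin K, A i k * B j k ≤
        ((∑ k : Fin K, A i k ^ 2) + ∑ k : Fin K, B j k ^ 2) / 2 := by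
      intro i j
      calc ∑ k : Fin K, A i k * B j k ≤ ∑ k : Fin K, (A i k ^ 2 + B j k ^ 2) / 2 :=
            Finset.sum_le_sum fun k _ => by nlinarith [sq_nonneg (A i k - B j k)]
      _ = _ := by rw [← Finset.sum_div, Finset.sum_add_distrib]
    have hhalf : ∀ (i : Fin N) (j : Fin M), ∑ k : Fin K, A i k * B j k ≤ 1 / 2 := by
      intro i j
      set x : (Fin N ⊕ Fin M) → ℝ := Sum.elim (fun i' => if i' = i then 1 else 0)
        (fun j' => if j' = j then 1 else 0) with hxdef
      have hx2 : ∑ r, x r ^ 2 = 2 := by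
        rw [Fintype.sum_sum_type]
        simp [hxdef, apply_ite (fun t : ℝ => t ^ 2)]
        norm_num
      have hyk : ∀ k, (Cᵀ *ᵥ x) k = A i k + B j k := by
        intro k
        simp only [Matrix.mulVec, dotProduct, Matrix.transpose_apply]
        rw [Fintype.sum_sum_type]
        simp [hxdef, hCdef, mul_ite]; rfl
      have hq := hquad x
      rw [hx2] at hq
      have hexp : ∑ k, (Cᵀ *ᵥ x) k ^ 2 =
          (∑ k : Fin K, A i k ^ 2) + (∑ k : Fin K, B j k ^ 2)
            + 2 * ∑ k : Fin K, A i k * B j k := by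
        simp only [hyk]
        calc ∑ k : Fin K, (A i k + B j k) ^ 2
            = ∑ k : Fin K, (A i k ^ 2 + B j k ^ 2 + 2 * (A i k * B j k)) :=
              Finset.sum_congr rfl fun k _ => by ring
        _ = _ := by
              rw [Finset.sum_add_distrib, Finset.sum_add_distrib, ← Finset.mul_sum,
                ← Finset.sum_add_distrib]
      rw [hexp] at hq
      have h1 := hAMGM i j
      linarith
    have hcchalf : ∀ n, cc n ≤ 1 / 2 := by
      intro n
      rw [hccdef]
      dsimp only
      split
      · next h => exact hhalf ⟨n, h.1⟩ ⟨n, h.2⟩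
      · norm_num
    set eN : ℕ → ℝ := fun n => if h : n < N then ∑ k : Fin K, A ⟨n, h⟩ k ^ 2 else 0 with heN
    set fM : ℕ → ℝ := fun n => if h : n < M then ∑ k : Fin K, B ⟨n, h⟩ k ^ 2 else 0 with hfM
    have heN0 : ∀ n, 0 ≤ eN n := by
      intro n; rw [heN]; dsimp only; split
      · exact Finset.sum_nonneg fun k _ => sq_nonneg _
      · exact le_refl 0
    have hfM0 : ∀ n, 0 ≤ fM n := by
      intro n; rw [hfM]; dsimp only; split
      · exact Finset.sum_nonneg fun k _ => sq_nonneg _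
      · exact le_refl 0
    have hccplus : ∀ n, max (cc n) 0 ≤ (eN n + fM n) / 2 := by
      intro n
      have hnn : 0 ≤ (eN n + fM n) / 2 := by
        have := heN0 n; have := hfM0 n; linarith
      apply max_le _ hnn
      rw [hccdef]; dsimp only; split
      · next h =>
        rw [heN, hfM]; dsimp only
        rw [dif_pos h.1, dif_pos h.2]
        exact hAMGM ⟨n, h.1⟩ ⟨n, h.2⟩
      · exact hnn
    have hKtr : (∑ i : Fin N, ∑ k : Fin K, A i k ^ 2)
        + (∑ j : Fin M, ∑ k : Fin K, B j k ^ 2) = (K : ℝ) := by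
      have h := congrArg Matrix.trace hAB
      rw [Matrix.trace_add, Matrix.trace_one] at h
      have hA : (Aᵀ * A).trace = ∑ i : Fin N, ∑ k : Fin K, A i k ^ 2 := by
        rw [Matrix.trace]
        simp only [Matrix.diag, Matrix.mul_apply, Matrix.transpose_apply, sq]
        exact Finset.sum_comm
      have hB : (Bᵀ * B).trace = ∑ j : Fin M, ∑ k : Fin K, B j k ^ 2 := by
        rw [Matrix.trace]
        simp only [Matrix.diag, Matrix.mul_apply, Matrix.transpose_apply, sq]
        exact Finset.sum_comm
      rw [hA, hB] at h
      simpa using h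
    have hsumeN : ∑ n ∈ Finset.range N, eN n = ∑ i : Fin N, ∑ k : Fin K, A i k ^ 2 := by
      rw [← Fin.sum_univ_eq_sum_range eN N]
      refine Finset.sum_congr rfl fun i _ => ?_
      rw [heN]; dsimp only
      rw [dif_pos i.isLt]
    have hsumfM : ∑ n ∈ Finset.range M, fM n = ∑ j : Fin M, ∑ k : Fin K, B j k ^ 2 := by
      rw [← Fin.sum_univ_eq_sum_range fM M]
      refine Finset.sum_congr rfl fun j _ => ?_
      rw [hfM]; dsimp only
      rw [dif_pos j.isLt]
    have hccsum : ∑ n ∈ Finset.range N, max (cc n) 0 ≤ (K : ℝ) / 2 := by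
      calc ∑ n ∈ Finset.range N, max (cc n) 0
          ≤ ∑ n ∈ Finset.range (max N M), max (cc n) 0 :=
            Finset.sum_le_sum_of_subset_of_nonneg
              (Finset.range_subset_range.2 (le_max_left N M))
              (fun n _ _ => le_max_right _ _)
      _ ≤ ∑ n ∈ Finset.range (max N M), (eN n + fM n) / 2 :=
            Finset.sum_le_sum fun n _ => hccplus n
      _ = ((∑ n ∈ Finset.range (max N M), eN n)
            + ∑ n ∈ Finset.range (max N M), fM n) / 2 := by
            rw [← Finset.sum_div, Finset.sum_add_distrib]
      _ = ((∑ n ∈ Finset.range N, eN n) + ∑ n ∈ Finset.range M, fM n) / 2 := by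
            congr 1
            congr 1
            · exact (Finset.sum_subset (Finset.range_subset_range.2 (le_max_left N M))
                (fun n _ hn => by
                  rw [heN]; dsimp only
                  rw [dif_neg (fun h => hn (Finset.mem_range.2 h))])).symm
            · exact (Finset.sum_subset (Finset.range_subset_range.2 (le_max_right N M))
                (fun n _ hn => by
                  rw [hfM]; dsimp only
                  rw [dif_neg (fun h => hn (Finset.mem_range.2 h))])).symm
      _ = (K : ℝ) / 2 := by rw [hsumeN, hsumfM, hKtr]
    have hfinal := comb σ hσ hσmono K N hKN (fun n => max (cc n) 0)
      (fun n => le_max_right _ _)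
      (fun n => max_le (hcchalf n) (by norm_num)) hccsum
    calc (Pᵀ * H * Q).trace = ∑ n ∈ Finset.range N, σ n * cc n := htr
    _ ≤ ∑ n ∈ Finset.range N, σ n * max (cc n) 0 :=
          Finset.sum_le_sum fun n _ => mul_le_mul_of_nonneg_left (le_max_left _ _) (hσ n)
    _ ≤ (∑ n ∈ Finset.range K, σ n) / 2 := hfinal
    _ = (∑ k : Fin K, σ (k : ℕ)) / 2 := by rw [Fin.sum_univ_eq_sum_range]
  refine ⟨⟨⟨c • U₁, c • V₁, horth, htropt.symm⟩, ?_⟩, horth, htropt⟩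
  rintro t ⟨P, Q, hPQ, rfl⟩
  exact hub P Q hPQ
end

section
/- Let Z ∈ ℝ^{N×M} be nonnegative with positive row sums and positive column sums, let D_P and D_Q be the diagonal matrices of row sums and column sums of Z, and L̃ the normalized Laplacian of the bipartite graph B = [[0,Z],[Zᵀ,0]]. Then for F = [P; Q] with P ∈ ℝ^{N×K}, Q ∈ ℝ^{M×K}: tr(Fᵀ L̃ F) = Σ_{i=1}^N Σ_{j=1}^M Z_{ij} · ‖ pᵢ/√(D_P(i,i)) − qⱼ/√(D_Q(j,j)) ‖₂², where pᵢ and qⱼ denote the i-th row of P and j-th row of Q. -/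
open Matrix Finset

lemma sum_key {N M K : ℕ} (Z : Matrix (Fin N) (Fin M) ℝ) (s : Fin N → ℝ) (t : Fin M → ℝ)
    (hs : ∀ i, s i ≠ 0) (ht : ∀ j, t j ≠ 0)
    (hr : ∀ i, ∑ j, Z i j = s i ^ 2) (hc : ∀ j, ∑ i, Z i j = t j ^ 2)
    (P : Matrix (Fin N) (Fin K) ℝ) (Q : Matrix (Fin M) (Fin K) ℝ) :
    ∑ i, ∑ j, Z i j * ∑ k, (P i k / s i - Q j k / t j) ^ 2
      = (∑ i, ∑ k, P i k ^ 2) + (∑ j, ∑ k, Q j k ^ 2)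
        - 2 * ∑ i, ∑ j, ∑ k, Z i j * P i k * Q j k / (s i * t j) := by
  have h1 : ∀ i j k, Z i j * (P i k / s i - Q j k / t j) ^ 2
      = Z i j * P i k ^ 2 / s i ^ 2 + Z i j * Q j k ^ 2 / t j ^ 2
        - 2 * (Z i j * P i k * Q j k / (s i * t j)) := by
    intro i j k
    field_simp
    ring
  have h2 : ∀ i j, Z i j * ∑ k, (P i k / s i - Q j k / t j) ^ 2
      = (∑ k, Z i j * P i k ^ 2 / s i ^ 2) + (∑ k, Z i j * Q j k ^ 2 / t j ^ 2)
        - 2 * ∑ k, Z i j * P i k * Q j k / (s i * t j) := by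
    intro i j
    rw [Finset.mul_sum, Finset.mul_sum, ← Finset.sum_add_distrib, ← Finset.sum_sub_distrib]
    exact Finset.sum_congr rfl fun k _ => h1 i j k
  simp only [h2, Finset.sum_add_distrib, Finset.sum_sub_distrib, ← Finset.mul_sum]
  have e1 : ∑ i, ∑ j, ∑ k, Z i j * P i k ^ 2 / s i ^ 2 = ∑ i, ∑ k, P i k ^ 2 := by
    refine Finset.sum_congr rfl fun i _ => ?_
    rw [Finset.sum_comm]
    refine Finset.sum_congr rfl fun k _ => ?_
    rw [← Finset.sum_div, ← Finset.sum_mul, hr i, mul_div_assoc, mul_comm,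
      div_mul_cancel₀ _ (pow_ne_zero 2 (hs i))]
  have e2 : ∑ i, ∑ j, ∑ k, Z i j * Q j k ^ 2 / t j ^ 2 = ∑ j, ∑ k, Q j k ^ 2 := by
    rw [Finset.sum_comm]
    refine Finset.sum_congr rfl fun j _ => ?_
    rw [Finset.sum_comm]
    refine Finset.sum_congr rfl fun k _ => ?_
    rw [← Finset.sum_div, ← Finset.sum_mul, hc j, mul_div_assoc, mul_comm,
      div_mul_cancel₀ _ (pow_ne_zero 2 (ht j))]
  rw [e1, e2]

/-- trace identity for the bipartite normalized Laplacian: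
tr(Fᵀ L̃ F) = Σᵢⱼ Zᵢⱼ ‖pᵢ/√D_P(i,i) − qⱼ/√D_Q(j,j)‖², F = [P;Q]. -/
theorem bipartite_laplacian_trace_identity
    (N M K : ℕ) (Z : Matrix (Fin N) (Fin M) ℝ)
    (hZ : ∀ i j, 0 ≤ Z i j)
    (hrow : ∀ i, 0 < ∑ j, Z i j) (hcol : ∀ j, 0 < ∑ i, Z i j)
    (P : Matrix (Fin N) (Fin K) ℝ) (Q : Matrix (Fin M) (Fin K) ℝ) :
    let dP : Fin N → ℝ := fun i => ∑ j, Z i j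
    let dQ : Fin M → ℝ := fun j => ∑ i, Z i j
    let B : Matrix (Fin N ⊕ Fin M) (Fin N ⊕ Fin M) ℝ := Matrix.fromBlocks 0 Z Zᵀ 0
    let Dinvhalf : Matrix (Fin N ⊕ Fin M) (Fin N ⊕ Fin M) ℝ :=
      Matrix.diagonal (Sum.elim (fun i => 1 / Real.sqrt (dP i))
        (fun j => 1 / Real.sqrt (dQ j)))
    let L : Matrix (Fin N ⊕ Fin M) (Fin N ⊕ Fin M) ℝ := 1 - Dinvhalf * B * Dinvhalf
    let F : Matrix (Fin N ⊕ Fin M) (Fin K) ℝ := Matrix.fromRows P Q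
    (Fᵀ * L * F).trace =
      ∑ i, ∑ j, Z i j *
        ∑ k, (P i k / Real.sqrt (dP i) - Q j k / Real.sqrt (dQ j)) ^ 2 := by
  intro dP dQ B Dinvhalf L F
  set p : Fin N → ℝ := fun i => 1 / Real.sqrt (dP i) with hp
  set q : Fin M → ℝ := fun j => 1 / Real.sqrt (dQ j) with hq
  have hsP : ∀ i, Real.sqrt (dP i) ≠ 0 := fun i =>
    ne_of_gt (Real.sqrt_pos.mpr (hrow i))
  have hsQ : ∀ j, Real.sqrt (dQ j) ≠ 0 := fun j =>
    ne_of_gt (Real.sqrt_pos.mpr (hcol j))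
  have hrP : ∀ i, ∑ j, Z i j = Real.sqrt (dP i) ^ 2 := fun i =>
    (Real.sq_sqrt (le_of_lt (hrow i))).symm
  have hcQ : ∀ j, ∑ i, Z i j = Real.sqrt (dQ j) ^ 2 := fun j =>
    (Real.sq_sqrt (le_of_lt (hcol j))).symm
  have hD : Dinvhalf = Matrix.fromBlocks (Matrix.diagonal p) 0 0 (Matrix.diagonal q) :=
    (Matrix.fromBlocks_diagonal p q).symm
  have hDBD : Dinvhalf * B * Dinvhalf
      = Matrix.fromBlocks 0 (Matrix.diagonal p * Z * Matrix.diagonal q)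
          (Matrix.diagonal q * Zᵀ * Matrix.diagonal p) 0 := by
    rw [hD, show B = Matrix.fromBlocks 0 Z Zᵀ 0 from rfl,
      Matrix.fromBlocks_multiply, Matrix.fromBlocks_multiply]
    simp only [Matrix.mul_zero, Matrix.zero_mul, add_zero, zero_add]
  have hLF : Fᵀ * L * F
      = Pᵀ * P + Qᵀ * Q
        - (Pᵀ * (Matrix.diagonal p * Z * Matrix.diagonal q * Q)
           + Qᵀ * (Matrix.diagonal q * Zᵀ * Matrix.diagonal p * P)) := by
    have hF : F = Matrix.fromRows P Q := rfl
    simp only [L, Matrix.mul_sub, Matrix.sub_mul, Matrix.mul_one, hDBD, hF,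
      Matrix.transpose_fromRows, Matrix.mul_assoc]
    rw [Matrix.fromBlocks_mul_fromRows]
    simp only [Matrix.zero_mul, Matrix.mul_zero, add_zero, zero_add,
      Matrix.fromCols_mul_fromRows]
    simp only [Matrix.mul_assoc]
  rw [hLF, Matrix.trace_sub, Matrix.trace_add, Matrix.trace_add]
  have swap3 : ∀ (f : Fin K → Fin N → Fin M → ℝ),
      ∑ k, ∑ i, ∑ j, f k i j = ∑ i, ∑ j, ∑ k, f k i j := by
    intro f
    rw [Finset.sum_comm]
    exact Finset.sum_congr rfl fun i _ => Finset.sum_comm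
  have t1 : (Pᵀ * P).trace = ∑ i, ∑ k, P i k ^ 2 := by
    simp only [Matrix.trace, Matrix.diag, Matrix.mul_apply, Matrix.transpose_apply]
    rw [Finset.sum_comm]
    simp [sq]
  have t2 : (Qᵀ * Q).trace = ∑ j, ∑ k, Q j k ^ 2 := by
    simp only [Matrix.trace, Matrix.diag, Matrix.mul_apply, Matrix.transpose_apply]
    rw [Finset.sum_comm]
    simp [sq]
  have hA : Matrix.diagonal p * Z * Matrix.diagonal q
      = Matrix.of (fun i j => p i * Z i j * q j) := by
    ext i j
    rw [Matrix.mul_diagonal, Matrix.diagonal_mul, Matrix.of_apply]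
  have hA' : Matrix.diagonal q * Zᵀ * Matrix.diagonal p
      = Matrix.of (fun j i => q j * Z i j * p i) := by
    ext j i
    rw [Matrix.mul_diagonal, Matrix.diagonal_mul, Matrix.of_apply, Matrix.transpose_apply]
  have t3 : (Pᵀ * (Matrix.diagonal p * Z * Matrix.diagonal q * Q)).trace
      = ∑ i, ∑ j, ∑ k, Z i j * P i k * Q j k / (Real.sqrt (dP i) * Real.sqrt (dQ j)) := by
    rw [hA]
    simp only [Matrix.trace, Matrix.diag, Matrix.mul_apply, Matrix.transpose_apply,
      Matrix.of_apply, Finset.mul_sum, Finset.sum_mul]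
    rw [← swap3]
    refine Finset.sum_congr rfl fun k _ => Finset.sum_congr rfl fun i _ =>
      Finset.sum_congr rfl fun j _ => ?_
    simp only [hp, hq]
    field_simp
  have t4 : (Qᵀ * (Matrix.diagonal q * Zᵀ * Matrix.diagonal p * P)).trace
      = ∑ i, ∑ j, ∑ k, Z i j * P i k * Q j k / (Real.sqrt (dP i) * Real.sqrt (dQ j)) := by
    rw [hA']
    simp only [Matrix.trace, Matrix.diag, Matrix.mul_apply, Matrix.transpose_apply,
      Matrix.of_apply, Finset.mul_sum, Finset.sum_mul]
    have swap3' : ∀ (f : Fin K → Fin M → Fin N → ℝ),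
        ∑ k, ∑ j, ∑ i, f k j i = ∑ i, ∑ j, ∑ k, f k j i := by
      intro f
      rw [Finset.sum_comm]
      have step : ∀ j : Fin M, ∑ k, ∑ i, f k j i = ∑ i, ∑ k, f k j i :=
        fun j => Finset.sum_comm
      simp only [step]
      exact Finset.sum_comm
    rw [← swap3']
    refine Finset.sum_congr rfl fun k _ => Finset.sum_congr rfl fun j _ =>
      Finset.sum_congr rfl fun i _ => ?_
    simp only [hp, hq]
    field_simp
  rw [t1, t2, t3, t4,
    sum_key Z (fun i => Real.sqrt (dP i)) (fun j => Real.sqrt (dQ j)) hsP hsQ hrP hcQ P Q]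
  ring
end

section
/- Ky Fan's theorem: for a real symmetric N×N matrix L with eigenvalues λ₁ ≤ λ₂ ≤ ... ≤ λ_N, the minimum of tr(FᵀLF) over all F ∈ ℝ^{N×K} with FᵀF = I_K equals λ₁ + λ₂ + ... + λ_K. -/
open Matrix Finset


lemma kyfan_trace_diag (N K : ℕ) (lam : Fin N → ℝ) (G : Matrix (Fin N) (Fin K) ℝ) :
    (Gᵀ * Matrix.diagonal lam * G).trace = ∑ i, lam i * ∑ k, (G i k)^2 := by
  rw [Matrix.trace]
  simp only [Matrix.diag_apply, Matrix.mul_apply, Matrix.transpose_apply,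
    Matrix.diagonal_apply, mul_ite, mul_zero, ite_mul, zero_mul,
    Finset.sum_ite_eq, Finset.sum_ite_eq', Finset.mem_univ, if_true]
  rw [Finset.sum_comm]
  exact Finset.sum_congr rfl fun i _ => by
    rw [Finset.mul_sum]; exact Finset.sum_congr rfl fun k _ => by ring

lemma kyfan_sum_ite (N K : ℕ) (hK : K ≤ N) (f : Fin N → ℝ) :
    ∑ i : Fin N, (if (i : ℕ) < K then f i else 0) = ∑ k : Fin K, f (Fin.castLE hK k) := by
  set g : ℕ → ℝ := fun n => if h : n < N then f ⟨n, h⟩ else 0 with hg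
  have h1 : ∑ k : Fin K, f (Fin.castLE hK k) = ∑ n ∈ Finset.range K, g n := by
    rw [← Fin.sum_univ_eq_sum_range]
    refine Finset.sum_congr rfl fun k _ => ?_
    simp only [hg]
    rw [dif_pos (lt_of_lt_of_le k.2 hK)]
    rfl
  have h2 : ∑ i : Fin N, (if (i : ℕ) < K then f i else 0)
      = ∑ n ∈ Finset.range N, (if n < K then g n else 0) := by
    rw [← Fin.sum_univ_eq_sum_range]
    exact Finset.sum_congr rfl fun i _ => by
      simp only [hg]
      rw [dif_pos i.2]
  rw [h1, h2, ← Finset.sum_filter]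
  congr 1
  ext n
  simp only [Finset.mem_filter, Finset.mem_range]
  omega

/-- Ky Fan: for a real symmetric N×N matrix L with eigenvalues
λ₁ ≤ ... ≤ λ_N (given via an orthogonal eigendecomposition L = U diag(λ) Uᵀ
with λ nondecreasing), the minimum of tr(FᵀLF) over F with FᵀF = I_K equals
λ₁ + ... + λ_K. -/
theorem ky_fan_min_trace
    (N K : ℕ) (hK : K ≤ N) (L : Matrix (Fin N) (Fin N) ℝ) (hL : L.IsSymm)
    (lam : Fin N → ℝ) (hmono : Monotone lam)
    (U : Matrix (Fin N) (Fin N) ℝ) (hU : Uᵀ * U = 1) (hU' : U * Uᵀ = 1)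
    (hdecomp : L = U * Matrix.diagonal lam * Uᵀ) :
    IsLeast {t : ℝ | ∃ F : Matrix (Fin N) (Fin K) ℝ,
        Fᵀ * F = 1 ∧ t = (Fᵀ * L * F).trace}
      (∑ k : Fin K, lam (Fin.castLE hK k)) := by
  -- general trace formula
  have key : ∀ F : Matrix (Fin N) (Fin K) ℝ,
      (Fᵀ * L * F).trace = ∑ i, lam i * ∑ k, ((Uᵀ * F) i k)^2 := by
    intro F
    have h : Fᵀ * L * F = (Uᵀ * F)ᵀ * Matrix.diagonal lam * (Uᵀ * F) := by
      rw [hdecomp]; simp [Matrix.transpose_mul, Matrix.mul_assoc]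
    rw [h, kyfan_trace_diag]
  constructor
  · -- membership: F = first K columns of U
    refine ⟨U.submatrix id (Fin.castLE hK), ?_, ?_⟩
    · ext j k
      have h := congrFun (congrFun hU (Fin.castLE hK j)) (Fin.castLE hK k)
      simp only [Matrix.mul_apply, Matrix.transpose_apply, Matrix.submatrix_apply, id] at h ⊢
      rw [h, Matrix.one_apply, Matrix.one_apply]
      simp [(Fin.castLE_injective hK).eq_iff]
    · rw [key]
      have hG : Uᵀ * (U.submatrix id (Fin.castLE hK))
          = (1 : Matrix (Fin N) (Fin N) ℝ).submatrix id (Fin.castLE hK) := by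
        ext i k
        have h := congrFun (congrFun hU i) (Fin.castLE hK k)
        simp only [Matrix.mul_apply, Matrix.transpose_apply, Matrix.submatrix_apply, id] at h ⊢
        rw [h]; rfl
      rw [hG]
      simp only [Finset.mul_sum]
      rw [Finset.sum_comm]
      refine (Finset.sum_congr rfl fun k _ => ?_).symm
      simp [Matrix.one_apply, pow_two]
  · -- lower bound
    rintro t ⟨F, hF, rfl⟩
    rw [key F]
    set G := Uᵀ * F with hGdef
    have hGG : Gᵀ * G = 1 := by
      rw [hGdef, Matrix.transpose_mul, Matrix.transpose_transpose,
        Matrix.mul_assoc, ← Matrix.mul_assoc U, hU', Matrix.one_mul, hF]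
    set s : Fin N → ℝ := fun i => ∑ k, (G i k)^2 with hs
    have hs0 : ∀ i, 0 ≤ s i := fun i => Finset.sum_nonneg fun k _ => sq_nonneg _
    -- each s i ≤ 1 via the projection P = G * Gᵀ
    have hs1 : ∀ i, s i ≤ 1 := by
      intro i
      set P := G * Gᵀ with hP
      have hPi : P i i = s i := by
        simp [hP, hs, Matrix.mul_apply, pow_two]
      have hPP : P * P = P := by
        rw [hP, Matrix.mul_assoc, ← Matrix.mul_assoc Gᵀ, hGG, Matrix.one_mul]
      have hsym : ∀ a b, P a b = P b a := by
        intro a b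
        simp [hP, Matrix.mul_apply, mul_comm]
      have h1 : P i i = ∑ j, (P i j)^2 := by
        conv_lhs => rw [← hPP]
        rw [Matrix.mul_apply]
        exact Finset.sum_congr rfl fun j _ => by rw [pow_two, hsym i j]
      have h2 : (P i i)^2 ≤ P i i := by
        nth_rewrite 2 [h1]
        exact Finset.single_le_sum (f := fun j => (P i j)^2)
          (fun j _ => sq_nonneg _) (Finset.mem_univ i)
      nlinarith [hPi ▸ hs0 i, h2]
    -- total mass: ∑ s = K
    have hsum : ∑ i, s i = (K : ℝ) := by
      have : ∑ i, s i = (Gᵀ * G).trace := by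
        rw [Matrix.trace]
        simp only [Matrix.diag_apply, Matrix.mul_apply, Matrix.transpose_apply]
        rw [Finset.sum_comm]
        exact Finset.sum_congr rfl fun i _ => Finset.sum_congr rfl fun k _ => by
          rw [pow_two]
      rw [this, hGG, Matrix.trace_one]
      simp
    -- threshold value c
    obtain ⟨c, hc1, hc2⟩ : ∃ c : ℝ, (∀ i : Fin N, (i : ℕ) < K → lam i ≤ c) ∧
        (∀ i : Fin N, K ≤ (i : ℕ) → c ≤ lam i) := by
      rcases lt_or_eq_of_le hK with h | h
      · exact ⟨lam ⟨K, h⟩,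
          fun i hi => hmono (by simp only [Fin.le_def]; omega),
          fun i hi => hmono (by simp only [Fin.le_def]; omega)⟩
      · rcases Nat.eq_zero_or_pos N with h0 | h0
        · exact ⟨0, fun i _ => absurd i.2 (by omega), fun i _ => absurd i.2 (by omega)⟩
        · exact ⟨lam ⟨N - 1, by omega⟩,
            fun i _ => hmono (by simp only [Fin.le_def]; omega),
            fun i hi => absurd i.2 (by omega)⟩
    -- pointwise inequality
    have hpt : ∀ i : Fin N, (if (i : ℕ) < K then lam i else 0)
        ≤ lam i * s i - c * s i + c * (if (i : ℕ) < K then 1 else 0) := by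
      intro i
      by_cases hi : (i : ℕ) < K
      · simp only [if_pos hi]
        nlinarith [hc1 i hi, hs1 i, hs0 i]
      · simp only [if_neg hi]
        nlinarith [hc2 i (le_of_not_gt hi), hs0 i]
    have hsum1 : ∑ i : Fin N, (if (i : ℕ) < K then lam i else 0)
        = ∑ k : Fin K, lam (Fin.castLE hK k) := kyfan_sum_ite N K hK lam
    have hsum2 : ∑ i : Fin N, (if (i : ℕ) < K then (1 : ℝ) else 0) = (K : ℝ) := by
      rw [kyfan_sum_ite N K hK (fun _ => (1 : ℝ))]
      simp
    calc ∑ k : Fin K, lam (Fin.castLE hK k)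
        = ∑ i : Fin N, (if (i : ℕ) < K then lam i else 0) := hsum1.symm
      _ ≤ ∑ i : Fin N, (lam i * s i - c * s i + c * (if (i : ℕ) < K then 1 else 0)) :=
          Finset.sum_le_sum fun i _ => hpt i
      _ = ∑ i, lam i * s i - c * ∑ i, s i + c * ∑ i : Fin N, (if (i : ℕ) < K then (1:ℝ) else 0) := by
          rw [Finset.sum_add_distrib, Finset.sum_sub_distrib, Finset.mul_sum, Finset.mul_sum]
      _ = ∑ i, lam i * s i := by rw [hsum, hsum2]; ring
end

section
/- Singular value thresholding solves the proximal problem: for X ∈ ℝ^{n₁×n₂} with SVD X = U Σ Vᵀ and τ > 0, the unique minimizer of J ↦ (1/2)‖J − X‖_F² + τ‖J‖_* (nuclear norm) is J* = U S_τ(Σ) Vᵀ, where S_τ(Σ) replaces each singular value σ by max(σ − τ, 0). -/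
open Matrix Finset

/-- Singular values of a real matrix: square roots of the eigenvalues of JᵀJ. -/
noncomputable def singularValues {n₁ n₂ : ℕ} (J : Matrix (Fin n₁) (Fin n₂) ℝ) :
    Fin n₂ → ℝ :=
  fun i => Real.sqrt (((by simpa using Matrix.isHermitian_conjTranspose_mul_self J : (Jᵀ * J).IsHermitian)).eigenvalues i)

/-- Nuclear norm: sum of singular values. -/
noncomputable def nuclearNorm {n₁ n₂ : ℕ} (J : Matrix (Fin n₁) (Fin n₂) ℝ) : ℝ :=
  ∑ j, singularValues J j

namespace SVTAux
open Polynomial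

lemma charpoly_conj_orth {n : ℕ} (P A : Matrix (Fin n) (Fin n) ℝ) (hP : P * Pᵀ = 1) :
    (P * A * Pᵀ).charpoly = A.charpoly := by
  have hPP : P.map (C : ℝ →+* ℝ[X]) * (Pᵀ).map (C : ℝ →+* ℝ[X]) = 1 := by
    rw [← Matrix.map_mul, hP]; simp
  have h1 : charmatrix (P * A * Pᵀ) =
      P.map (C : ℝ →+* ℝ[X]) * charmatrix A * (Pᵀ).map (C : ℝ →+* ℝ[X]) := by
    rw [charmatrix, charmatrix, Matrix.mul_sub, Matrix.sub_mul]
    congr 1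
    · rw [Matrix.mul_assoc, scalar_commute (X : ℝ[X]) (Commute.all _) _,
        ← Matrix.mul_assoc, hPP, Matrix.one_mul]
    · show _ = P.map (C : ℝ →+* ℝ[X]) * (A.map C) * (Pᵀ).map (C : ℝ →+* ℝ[X])
      rw [← Matrix.map_mul, ← Matrix.map_mul]; rfl
  have h2 : (P.map (C : ℝ →+* ℝ[X])).det * ((Pᵀ).map (C : ℝ →+* ℝ[X])).det = 1 := by
    rw [← det_mul, hPP, det_one]
  rw [Matrix.charpoly, Matrix.charpoly, h1, det_mul, det_mul, mul_right_comm, h2, one_mul]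

lemma charpoly_diag {n : ℕ} (μ : Fin n → ℝ) :
    (Matrix.diagonal μ).charpoly = ∏ i, (X - C (μ i)) := by
  have : charmatrix (Matrix.diagonal μ) = Matrix.diagonal fun i => (X - C (μ i)) := by
    ext i j
    by_cases h : i = j
    · subst h; simp [charmatrix_apply_eq]
    · simp [charmatrix_apply_ne _ _ _ h, Matrix.diagonal_apply_ne _ h]
  rw [Matrix.charpoly, this, det_diagonal]

lemma star_eq_transpose {n : ℕ} (M : Matrix (Fin n) (Fin n) ℝ) : star M = Mᵀ := by
  ext i j; simp [Matrix.star_apply]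

lemma eig_multiset_eq {n : ℕ} {A : Matrix (Fin n) (Fin n) ℝ} (hA : A.IsHermitian)
    (P : Matrix (Fin n) (Fin n) ℝ) (hP : P * Pᵀ = 1) (μ : Fin n → ℝ)
    (h : A = P * Matrix.diagonal μ * Pᵀ) :
    (univ.val.map hA.eigenvalues : Multiset ℝ) = univ.val.map μ := by
  have hQ : (hA.eigenvectorUnitary : Matrix (Fin n) (Fin n) ℝ) *
      (hA.eigenvectorUnitary : Matrix (Fin n) (Fin n) ℝ)ᵀ = 1 := by
    have := hA.eigenvectorUnitary.2.2
    rwa [star_eq_transpose] at this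
  have hspec : A = (hA.eigenvectorUnitary : Matrix (Fin n) (Fin n) ℝ) *
      Matrix.diagonal hA.eigenvalues * (hA.eigenvectorUnitary : Matrix (Fin n) (Fin n) ℝ)ᵀ := by
    have := hA.spectral_theorem
    rw [Unitary.conjStarAlgAut_apply, star_eq_transpose] at this
    simpa using this
  have h1 := congrArg Matrix.charpoly hspec
  rw [charpoly_conj_orth _ _ hQ, charpoly_diag] at h1
  have h1' := congrArg Matrix.charpoly h
  rw [charpoly_conj_orth _ _ hP, charpoly_diag] at h1'
  have h2 : ∀ (f : Fin n → ℝ), (∏ i, (X - C (f i))) =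
      ((univ.val.map f).map (fun a => X - C a)).prod := by
    intro f; rw [Finset.prod_eq_multiset_prod, Multiset.map_map]; rfl
  have := congrArg Polynomial.roots
    ((h2 hA.eigenvalues).symm.trans ((h1.symm.trans h1').trans (h2 μ)))
  rwa [roots_multiset_prod_X_sub_C, roots_multiset_prod_X_sub_C] at this

lemma nuclearNorm_eq_of_decomp {n₁ n₂ : ℕ} (J : Matrix (Fin n₁) (Fin n₂) ℝ)
    (P : Matrix (Fin n₂) (Fin n₂) ℝ) (hP : P * Pᵀ = 1) (μ : Fin n₂ → ℝ)
    (h : Jᵀ * J = P * Matrix.diagonal μ * Pᵀ) :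
    nuclearNorm J = ∑ i, Real.sqrt (μ i) := by
  have hm := eig_multiset_eq (by simpa using Matrix.isHermitian_conjTranspose_mul_self J : (Jᵀ * J).IsHermitian) P hP μ h
  have h3 : ∀ (f : Fin n₂ → ℝ), (∑ i, Real.sqrt (f i)) =
      ((univ.val.map f).map Real.sqrt).sum := by
    intro f; rw [Finset.sum_eq_multiset_sum, Multiset.map_map]; rfl
  rw [nuclearNorm]
  unfold singularValues
  rw [h3, h3, hm]

lemma entry_transpose_mul {n₁ n₂ : ℕ} (A B : Matrix (Fin n₁) (Fin n₂) ℝ) (j k : Fin n₂) :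
    (Aᵀ * B) j k = ∑ i, A i j * B i k := by
  rw [Matrix.mul_apply]
  simp only [Matrix.transpose_apply]

lemma psd_diag_nonneg {n : ℕ} {M : Matrix (Fin n) (Fin n) ℝ} (hM : M.PosSemidef)
    (j : Fin n) : 0 ≤ M j j := by
  exact hM.diag_nonneg

/-- Duality inequality: trace (Wᵀ M) ≤ nuclearNorm M when ‖W‖_op ≤ 1. -/
lemma trace_le_nuclearNorm {n₁ n₂ : ℕ} (M W : Matrix (Fin n₁) (Fin n₂) ℝ)
    (hW : (1 - Wᵀ * W).PosSemidef) :
    Matrix.trace (Wᵀ * M) ≤ nuclearNorm M := by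
  set hH := (by simpa using Matrix.isHermitian_conjTranspose_mul_self M : (Mᵀ * M).IsHermitian) with hHdef
  set Q : Matrix (Fin n₂) (Fin n₂) ℝ :=
    (hH.eigenvectorUnitary : Matrix (Fin n₂) (Fin n₂) ℝ) with hQdef
  have hQ1 : Q * Qᵀ = 1 := by
    have := hH.eigenvectorUnitary.2.2
    rwa [star_eq_transpose] at this
  have hQ2 : Qᵀ * Q = 1 := by
    have := hH.eigenvectorUnitary.2.1
    rwa [star_eq_transpose] at this
  have hdiagM : Qᵀ * (Mᵀ * M) * Q = Matrix.diagonal hH.eigenvalues := by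
    have := hH.spectral_theorem
    rw [Unitary.conjStarAlgAut_apply, star_eq_transpose] at this
    have h' : Mᵀ * M = Q * Matrix.diagonal hH.eigenvalues * Qᵀ := by simpa using this
    conv_lhs => rw [h']
    simp only [Matrix.mul_assoc]
    rw [← Matrix.mul_assoc Qᵀ Q, hQ2, Matrix.one_mul, Matrix.mul_one]
  have h1 : Matrix.trace (Wᵀ * M) = Matrix.trace ((W * Q)ᵀ * (M * Q)) := by
    rw [Matrix.transpose_mul, Matrix.trace_mul_comm Wᵀ M,
      Matrix.trace_mul_comm (Qᵀ * Wᵀ) (M * Q), Matrix.mul_assoc M Q (Qᵀ * Wᵀ),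
      ← Matrix.mul_assoc Q Qᵀ Wᵀ, hQ1, Matrix.one_mul]
  have hC : ∀ j, ∑ i, ((M * Q) i j)^2 = hH.eigenvalues j := by
    intro j
    have h2 : ((M * Q)ᵀ * (M * Q)) j j = Matrix.diagonal hH.eigenvalues j j := by
      rw [Matrix.transpose_mul, ← Matrix.mul_assoc (Qᵀ * Mᵀ) M Q,
        Matrix.mul_assoc Qᵀ Mᵀ M, hdiagM]
    rw [entry_transpose_mul] at h2
    simp only [Matrix.diagonal_apply_eq] at h2
    rw [← h2]
    exact Finset.sum_congr rfl fun i _ => (pow_two _)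
  have hB : ∀ j, ∑ i, ((W * Q) i j)^2 ≤ 1 := by
    intro j
    have hpsd : (Qᵀ * (1 - Wᵀ * W) * Q).PosSemidef := by
      have := hW.conjTranspose_mul_mul_same Q
      have hc : Qᴴ = Qᵀ := by
        rw [← star_eq_transpose]; rfl
      rwa [hc] at this
    have h0 := psd_diag_nonneg hpsd j
    have hexp : Qᵀ * (1 - Wᵀ * W) * Q = 1 - (W * Q)ᵀ * (W * Q) := by
      rw [Matrix.mul_sub, Matrix.sub_mul, Matrix.mul_one, hQ2, Matrix.transpose_mul]
      congr 1
      rw [← Matrix.mul_assoc (Qᵀ * Wᵀ) W Q, Matrix.mul_assoc Qᵀ Wᵀ W, Matrix.mul_assoc]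
    rw [hexp] at h0
    have h3 : ((W * Q)ᵀ * (W * Q)) j j = ∑ i, ((W * Q) i j)^2 := by
      rw [entry_transpose_mul]
      exact Finset.sum_congr rfl fun i _ => (pow_two _).symm
    simp only [Matrix.sub_apply, Matrix.one_apply_eq, h3] at h0
    linarith
  have hnn : nuclearNorm M = ∑ j, Real.sqrt (hH.eigenvalues j) := rfl
  rw [h1, hnn, Matrix.trace]
  have key : ∀ j, Matrix.diag ((W * Q)ᵀ * (M * Q)) j ≤ Real.sqrt (hH.eigenvalues j) := by
    intro j
    have hd : Matrix.diag ((W * Q)ᵀ * (M * Q)) j = ∑ i, (W * Q) i j * (M * Q) i j := by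
      rw [Matrix.diag_apply, entry_transpose_mul]
    rw [hd]
    calc ∑ i, (W * Q) i j * (M * Q) i j
        ≤ Real.sqrt (∑ i, ((W * Q) i j)^2) * Real.sqrt (∑ i, ((M * Q) i j)^2) :=
          Real.sum_mul_le_sqrt_mul_sqrt _ _ _
      _ ≤ 1 * Real.sqrt (hH.eigenvalues j) := by
          rw [hC j]
          apply mul_le_mul_of_nonneg_right _ (Real.sqrt_nonneg _)
          rw [show (1:ℝ) = Real.sqrt 1 by simp]
          exact Real.sqrt_le_sqrt (hB j)
      _ = Real.sqrt (hH.eigenvalues j) := one_mul _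
  exact Finset.sum_le_sum fun j _ => key j

variable {n₁ n₂ : ℕ}

def Dmat (n₁ n₂ : ℕ) (d : ℕ → ℝ) : Matrix (Fin n₁) (Fin n₂) ℝ :=
  Matrix.of fun (i : Fin n₁) (j : Fin n₂) => if (i : ℕ) = (j : ℕ) then d (i : ℕ) else 0

lemma sum_ite_nat_eq (j : Fin n₂) (f : Fin n₁ → ℝ) :
    ∑ i : Fin n₁, (if (i : ℕ) = (j : ℕ) then f i else 0)
      = if h : (j : ℕ) < n₁ then f ⟨j, h⟩ else 0 := by
  split_ifs with h
  · rw [Finset.sum_eq_single ⟨j, h⟩]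
    · simp
    · intro i _ hi
      rw [if_neg]
      intro hc
      exact hi (Fin.ext hc)
    · intro hm; exact absurd (Finset.mem_univ _) hm
  · apply Finset.sum_eq_zero
    intro i _
    rw [if_neg]
    intro hc
    exact h (hc ▸ i.isLt)

lemma sum_split (F : Fin n₁ → Fin n₂ → ℝ) :
    ∑ i : Fin n₁, ∑ j : Fin n₂, F i j
      = (∑ j : Fin n₂, if h : (j : ℕ) < n₁ then F ⟨j, h⟩ j else 0)
        + ∑ i : Fin n₁, ∑ j : Fin n₂, (if (i : ℕ) = (j : ℕ) then 0 else F i j) := by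
  have : ∀ (i : Fin n₁) (j : Fin n₂), F i j = (if (i : ℕ) = (j : ℕ) then F i j else 0)
      + (if (i : ℕ) = (j : ℕ) then 0 else F i j) := by
    intro i j; split_ifs <;> ring
  calc ∑ i : Fin n₁, ∑ j : Fin n₂, F i j
      = ∑ i : Fin n₁, ∑ j : Fin n₂, ((if (i : ℕ) = (j : ℕ) then F i j else 0)
        + (if (i : ℕ) = (j : ℕ) then 0 else F i j)) := by
        exact Finset.sum_congr rfl fun i _ => Finset.sum_congr rfl fun j _ => this i j
    _ = (∑ i : Fin n₁, ∑ j : Fin n₂, (if (i : ℕ) = (j : ℕ) then F i j else 0))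
        + ∑ i : Fin n₁, ∑ j : Fin n₂, (if (i : ℕ) = (j : ℕ) then 0 else F i j) := by
        rw [← Finset.sum_add_distrib]
        exact Finset.sum_congr rfl fun i _ => Finset.sum_add_distrib
    _ = _ := by
        congr 1
        rw [Finset.sum_comm]
        exact Finset.sum_congr rfl fun j _ => sum_ite_nat_eq j _

lemma transpose_mul_Dmat (d e : ℕ → ℝ) :
    (Dmat n₁ n₂ d)ᵀ * (Dmat n₁ n₂ e)
      = Matrix.diagonal (fun j : Fin n₂ =>
          if (j : ℕ) < n₁ then d (j : ℕ) * e (j : ℕ) else 0) := by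
  ext j k
  rw [entry_transpose_mul]
  have : ∀ i : Fin n₁, Dmat n₁ n₂ d i j * Dmat n₁ n₂ e i k
      = if (i : ℕ) = (j : ℕ) then
          (d (i : ℕ) * if (i : ℕ) = (k : ℕ) then e (i : ℕ) else 0) else 0 := by
    intro i
    simp only [Dmat, Matrix.of_apply]
    split_ifs <;> ring
  rw [Finset.sum_congr rfl fun i _ => this i, sum_ite_nat_eq]
  by_cases hjk : j = k
  · subst hjk
    simp only [Matrix.diagonal_apply_eq]
    by_cases h : (j : ℕ) < n₁
    · rw [dif_pos h, if_pos h]; simp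
    · rw [dif_neg h, if_neg h]
  · rw [Matrix.diagonal_apply_ne _ hjk]
    have hne : (j : ℕ) ≠ (k : ℕ) := fun hc => hjk (Fin.ext hc)
    by_cases h : (j : ℕ) < n₁
    · rw [dif_pos h, if_neg hne, mul_zero]
    · rw [dif_neg h]

lemma nuclearNorm_Dmat (d : ℕ → ℝ) (hd : ∀ k, 0 ≤ d k) :
    nuclearNorm (Dmat n₁ n₂ d)
      = ∑ j : Fin n₂, if (j : ℕ) < n₁ then d (j : ℕ) else 0 := by
  have h := nuclearNorm_eq_of_decomp (Dmat n₁ n₂ d) 1 (by simp)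
    (fun j : Fin n₂ => if (j : ℕ) < n₁ then d (j : ℕ) * d (j : ℕ) else 0)
    (by rw [transpose_mul_Dmat]; simp)
  rw [h]
  apply Finset.sum_congr rfl
  intro j _
  by_cases hj : (j : ℕ) < n₁
  · simp only [hj, if_true]
    exact Real.sqrt_mul_self (hd j)
  · simp [hj]

/-- The sum of absolute values of the diagonal is at most the nuclear norm. -/
lemma sum_diag_abs_le_nuclearNorm (M : Matrix (Fin n₁) (Fin n₂) ℝ) :
    (∑ j : Fin n₂, if h : (j : ℕ) < n₁ then |M ⟨j, h⟩ j| else 0) ≤ nuclearNorm M := by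
  set W : Matrix (Fin n₁) (Fin n₂) ℝ :=
    Matrix.of fun (i : Fin n₁) (j : Fin n₂) =>
      if (i : ℕ) = (j : ℕ) then (if 0 ≤ M i j then (1:ℝ) else -1) else 0 with hWdef
  have hWtW : Wᵀ * W = Matrix.diagonal
      (fun j : Fin n₂ => if (j : ℕ) < n₁ then (1:ℝ) else 0) := by
    ext j k
    rw [entry_transpose_mul]
    have : ∀ i : Fin n₁, W i j * W i k
        = if (i : ℕ) = (j : ℕ) then
            ((if 0 ≤ M i j then (1:ℝ) else -1) *
              if (i : ℕ) = (k : ℕ) then (if 0 ≤ M i k then (1:ℝ) else -1) else 0) else 0 := by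
      intro i
      simp only [hWdef, Matrix.of_apply]
      split_ifs <;> ring
    rw [Finset.sum_congr rfl fun i _ => this i, sum_ite_nat_eq]
    by_cases hjk : j = k
    · subst hjk
      simp only [Matrix.diagonal_apply_eq]
      by_cases h : (j : ℕ) < n₁
      · rw [dif_pos h, if_pos h]
        split_ifs <;> norm_num
      · rw [dif_neg h, if_neg h]
    · rw [Matrix.diagonal_apply_ne _ hjk]
      have hne : (j : ℕ) ≠ (k : ℕ) := fun hc => hjk (Fin.ext hc)
      by_cases h : (j : ℕ) < n₁
      · rw [dif_pos h, if_neg hne, mul_zero]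
      · rw [dif_neg h]
  have hpsd : (1 - Wᵀ * W).PosSemidef := by
    rw [hWtW]
    have : (1 : Matrix (Fin n₂) (Fin n₂) ℝ) -
        Matrix.diagonal (fun j : Fin n₂ => if (j : ℕ) < n₁ then (1:ℝ) else 0)
        = Matrix.diagonal (fun j : Fin n₂ => if (j : ℕ) < n₁ then (0:ℝ) else 1) := by
      ext j k
      rcases eq_or_ne j k with rfl | hne
      · simp only [Matrix.sub_apply, Matrix.one_apply_eq, Matrix.diagonal_apply_eq]
        split_ifs <;> norm_num
      · simp [Matrix.sub_apply, Matrix.one_apply_ne hne, Matrix.diagonal_apply_ne _ hne]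
    rw [this]
    apply Matrix.PosSemidef.diagonal
    intro j
    by_cases hj : (j : ℕ) < n₁ <;> simp [hj]
  have htr : Matrix.trace (Wᵀ * M)
      = ∑ j : Fin n₂, if h : (j : ℕ) < n₁ then |M ⟨j, h⟩ j| else 0 := by
    rw [Matrix.trace]
    apply Finset.sum_congr rfl
    intro j _
    rw [Matrix.diag_apply, Matrix.mul_apply]
    have : ∀ i : Fin n₁, Wᵀ j i * M i j
        = if (i : ℕ) = (j : ℕ) then ((if 0 ≤ M i j then (1:ℝ) else -1) * M i j) else 0 := by
      intro i
      rw [Matrix.transpose_apply]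
      simp only [hWdef, Matrix.of_apply]
      split_ifs <;> ring
    rw [Finset.sum_congr rfl fun i _ => this i, sum_ite_nat_eq]
    split_ifs with h hm
    · rw [abs_of_nonneg hm, one_mul]
    · rw [abs_of_neg (lt_of_not_ge hm)]; ring
    · rfl
  rw [← htr]
  exact trace_le_nuclearNorm M W hpsd

lemma frob_eq_trace (B : Matrix (Fin n₁) (Fin n₂) ℝ) :
    Matrix.trace (Bᵀ * B) = ∑ i : Fin n₁, ∑ j : Fin n₂, (B i j)^2 := by
  calc Matrix.trace (Bᵀ * B) = ∑ j : Fin n₂, ∑ i : Fin n₁, (B i j)^2 := by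
        rw [Matrix.trace]
        apply Finset.sum_congr rfl
        intro j _
        rw [Matrix.diag_apply, entry_transpose_mul]
        exact Finset.sum_congr rfl fun i _ => (pow_two _).symm
    _ = _ := Finset.sum_comm

lemma frob_conj (U : Matrix (Fin n₁) (Fin n₁) ℝ) (V : Matrix (Fin n₂) (Fin n₂) ℝ)
    (A : Matrix (Fin n₁) (Fin n₂) ℝ) (hU : Uᵀ * U = 1) (hV : Vᵀ * V = 1) :
    ∑ i : Fin n₁, ∑ j : Fin n₂, ((U * A * Vᵀ) i j)^2
      = ∑ i : Fin n₁, ∑ j : Fin n₂, (A i j)^2 := by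
  rw [← frob_eq_trace, ← frob_eq_trace]
  have h1 : (U * A * Vᵀ)ᵀ * (U * A * Vᵀ) = V * (Aᵀ * A) * Vᵀ := by
    simp only [Matrix.transpose_mul, Matrix.transpose_transpose, Matrix.mul_assoc]
    rw [← Matrix.mul_assoc Uᵀ U (A * Vᵀ), hU, Matrix.one_mul]
  rw [h1, Matrix.trace_mul_cycle, hV, Matrix.one_mul]

lemma nuclearNorm_conj (U : Matrix (Fin n₁) (Fin n₁) ℝ) (V : Matrix (Fin n₂) (Fin n₂) ℝ)
    (A : Matrix (Fin n₁) (Fin n₂) ℝ) (hU : Uᵀ * U = 1) (hV : Vᵀ * V = 1) (hV' : V * Vᵀ = 1) :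
    nuclearNorm (U * A * Vᵀ) = nuclearNorm A := by
  set hH := (by simpa using Matrix.isHermitian_conjTranspose_mul_self A : (Aᵀ * A).IsHermitian) with hHdef
  set Q : Matrix (Fin n₂) (Fin n₂) ℝ :=
    (hH.eigenvectorUnitary : Matrix (Fin n₂) (Fin n₂) ℝ) with hQdef
  have hQ1 : Q * Qᵀ = 1 := by
    have := hH.eigenvectorUnitary.2.2
    rwa [star_eq_transpose] at this
  have hspec : Aᵀ * A = Q * Matrix.diagonal hH.eigenvalues * Qᵀ := by
    have := hH.spectral_theorem
    rw [Unitary.conjStarAlgAut_apply, star_eq_transpose] at this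
    simpa using this
  have hdecomp : (U * A * Vᵀ)ᵀ * (U * A * Vᵀ)
      = (V * Q) * Matrix.diagonal hH.eigenvalues * (V * Q)ᵀ := by
    have h1 : (U * A * Vᵀ)ᵀ * (U * A * Vᵀ) = V * (Aᵀ * A) * Vᵀ := by
      simp only [Matrix.transpose_mul, Matrix.transpose_transpose, Matrix.mul_assoc]
      rw [← Matrix.mul_assoc Uᵀ U (A * Vᵀ), hU, Matrix.one_mul]
    rw [h1]
    conv_lhs => rw [hspec]
    rw [Matrix.transpose_mul]
    simp only [Matrix.mul_assoc]
  have hVQ : (V * Q) * (V * Q)ᵀ = 1 := by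
    rw [Matrix.transpose_mul, Matrix.mul_assoc, ← Matrix.mul_assoc Q Qᵀ Vᵀ, hQ1,
      Matrix.one_mul, hV']
  have h2 := nuclearNorm_eq_of_decomp (U * A * Vᵀ) (V * Q) hVQ hH.eigenvalues hdecomp
  rw [h2]
  rfl

lemma scalar_soft (s t m : ℝ) (hs : 0 ≤ s) (ht : 0 < t) :
    (1/2)*(max (s-t) 0 - s)^2 + t * max (s-t) 0 + (1/2)*(m - max (s-t) 0)^2
      ≤ (1/2)*(m-s)^2 + t*|m| := by
  rcases abs_cases m with ⟨h1, h2⟩ | ⟨h1, h2⟩ <;>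
    rcases max_cases (s-t) 0 with ⟨h3, h4⟩ | ⟨h3, h4⟩ <;>
    rw [h1, h3] <;> nlinarith


lemma Dmat_diag (d : ℕ → ℝ) (j : Fin n₂) (h : (j : ℕ) < n₁) :
    Dmat n₁ n₂ d ⟨(j : ℕ), h⟩ j = d (j : ℕ) := by
  simp [Dmat]

lemma Dmat_off (d : ℕ → ℝ) (i : Fin n₁) (j : Fin n₂) (h : ¬ (i : ℕ) = (j : ℕ)) :
    Dmat n₁ n₂ d i j = 0 := by
  simp [Dmat, h]

lemma key_ineq (M : Matrix (Fin n₁) (Fin n₂) ℝ) (σ : ℕ → ℝ) (hσ : ∀ k, 0 ≤ σ k)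
    (τ : ℝ) (hτ : 0 < τ) :
    (1/2) * (∑ i : Fin n₁, ∑ j : Fin n₂,
        (Dmat n₁ n₂ (fun k => max (σ k - τ) 0) i j - Dmat n₁ n₂ σ i j)^2)
      + τ * nuclearNorm (Dmat n₁ n₂ (fun k => max (σ k - τ) 0))
      + (1/2) * (∑ i : Fin n₁, ∑ j : Fin n₂,
        (M i j - Dmat n₁ n₂ (fun k => max (σ k - τ) 0) i j)^2)
    ≤ (1/2) * (∑ i : Fin n₁, ∑ j : Fin n₂, (M i j - Dmat n₁ n₂ σ i j)^2)
      + τ * nuclearNorm M := by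
  set dm : ℕ → ℝ := fun k => max (σ k - τ) 0 with hdm
  set D := Dmat n₁ n₂ dm with hD
  set S := Dmat n₁ n₂ σ with hS
  -- diagonal/offdiagonal splits
  have e1 : ∑ i : Fin n₁, ∑ j : Fin n₂, (D i j - S i j)^2
      = ∑ j : Fin n₂, (if h : (j : ℕ) < n₁ then (dm (j : ℕ) - σ (j : ℕ))^2 else 0) := by
    rw [sum_split]
    have hoff : (∑ i : Fin n₁, ∑ j : Fin n₂,
        (if (i : ℕ) = (j : ℕ) then 0 else (D i j - S i j)^2)) = 0 := by
      apply Finset.sum_eq_zero; intro i _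
      apply Finset.sum_eq_zero; intro j _
      split_ifs with h
      · rfl
      · rw [hD, hS, Dmat_off _ _ _ h, Dmat_off _ _ _ h]; ring
    rw [hoff, add_zero]
    apply Finset.sum_congr rfl; intro j _
    split_ifs with h
    · rw [hD, hS, Dmat_diag, Dmat_diag]
    · rfl
  have e2 : ∑ i : Fin n₁, ∑ j : Fin n₂, (M i j - D i j)^2
      = (∑ j : Fin n₂, (if h : (j : ℕ) < n₁ then (M ⟨(j:ℕ), h⟩ j - dm (j : ℕ))^2 else 0))
        + ∑ i : Fin n₁, ∑ j : Fin n₂, (if (i : ℕ) = (j : ℕ) then 0 else (M i j)^2) := by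
    rw [sum_split]
    congr 1
    · apply Finset.sum_congr rfl; intro j _
      split_ifs with h
      · rw [hD, Dmat_diag]
      · rfl
    · apply Finset.sum_congr rfl; intro i _
      apply Finset.sum_congr rfl; intro j _
      split_ifs with h
      · rfl
      · rw [hD, Dmat_off _ _ _ h, sub_zero]
  have e3 : ∑ i : Fin n₁, ∑ j : Fin n₂, (M i j - S i j)^2
      = (∑ j : Fin n₂, (if h : (j : ℕ) < n₁ then (M ⟨(j:ℕ), h⟩ j - σ (j : ℕ))^2 else 0))
        + ∑ i : Fin n₁, ∑ j : Fin n₂, (if (i : ℕ) = (j : ℕ) then 0 else (M i j)^2) := by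
    rw [sum_split]
    congr 1
    · apply Finset.sum_congr rfl; intro j _
      split_ifs with h
      · rw [hS, Dmat_diag]
      · rfl
    · apply Finset.sum_congr rfl; intro i _
      apply Finset.sum_congr rfl; intro j _
      split_ifs with h
      · rfl
      · rw [hS, Dmat_off _ _ _ h, sub_zero]
  have eN : nuclearNorm D = ∑ j : Fin n₂, (if h : (j : ℕ) < n₁ then dm (j : ℕ) else 0) := by
    rw [hD, nuclearNorm_Dmat dm (fun k => le_max_right _ _)]
    apply Finset.sum_congr rfl; intro j _
    rw [dite_eq_ite]
  have hNM := sum_diag_abs_le_nuclearNorm M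
  -- per-index scalar inequality
  have hsum : ∑ j : Fin n₂,
      ((1/2) * (if h : (j : ℕ) < n₁ then (dm (j : ℕ) - σ (j : ℕ))^2 else 0)
        + τ * (if h : (j : ℕ) < n₁ then dm (j : ℕ) else 0)
        + (1/2) * (if h : (j : ℕ) < n₁ then (M ⟨(j:ℕ), h⟩ j - dm (j : ℕ))^2 else 0))
      ≤ ∑ j : Fin n₂,
      ((1/2) * (if h : (j : ℕ) < n₁ then (M ⟨(j:ℕ), h⟩ j - σ (j : ℕ))^2 else 0)
        + τ * (if h : (j : ℕ) < n₁ then |M ⟨(j:ℕ), h⟩ j| else 0)) := by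
    apply Finset.sum_le_sum
    intro j _
    split_ifs with h
    · have := scalar_soft (σ (j : ℕ)) τ (M ⟨(j:ℕ), h⟩ j) (hσ _) hτ
      rw [hdm]
      linarith
    · simp
  rw [e1, e2, e3, eN]
  have expand : ∀ (A B C : Fin n₂ → ℝ),
      ∑ j : Fin n₂, ((1/2) * A j + τ * B j + (1/2) * C j)
        = (1/2) * (∑ j, A j) + τ * (∑ j, B j) + (1/2) * (∑ j, C j) := by
    intro A B C
    rw [Finset.sum_add_distrib, Finset.sum_add_distrib, ← Finset.mul_sum, ← Finset.mul_sum,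
      ← Finset.mul_sum]
  have expand2 : ∀ (A B : Fin n₂ → ℝ),
      ∑ j : Fin n₂, ((1/2) * A j + τ * B j)
        = (1/2) * (∑ j, A j) + τ * (∑ j, B j) := by
    intro A B
    rw [Finset.sum_add_distrib, ← Finset.mul_sum, ← Finset.mul_sum]
  rw [expand, expand2] at hsum
  have hτ' : 0 ≤ τ := le_of_lt hτ
  have hNM' : τ * (∑ j : Fin n₂, (if h : (j : ℕ) < n₁ then |M ⟨(j:ℕ), h⟩ j| else 0))
      ≤ τ * nuclearNorm M := mul_le_mul_of_nonneg_left hNM hτ'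
  nlinarith [hsum, hNM']

end SVTAux

open SVTAux in
/-- singular value thresholding: for X with SVD X = U Σ Vᵀ and
τ > 0, the unique minimizer of J ↦ (1/2)‖J − X‖_F² + τ‖J‖_* is
J* = U S_τ(Σ) Vᵀ, where S_τ replaces each singular value σ by max(σ − τ, 0). -/
theorem svt_prox_nuclear
    (n₁ n₂ : ℕ) (X : Matrix (Fin n₁) (Fin n₂) ℝ) (τ : ℝ) (hτ : 0 < τ)
    (U : Matrix (Fin n₁) (Fin n₁) ℝ) (hU : Uᵀ * U = 1) (hU' : U * Uᵀ = 1)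
    (V : Matrix (Fin n₂) (Fin n₂) ℝ) (hV : Vᵀ * V = 1) (hV' : V * Vᵀ = 1)
    (σ : ℕ → ℝ) (hσ : ∀ i, 0 ≤ σ i)
    (hX : X = U * (Matrix.of fun (i : Fin n₁) (j : Fin n₂) =>
      if (i : ℕ) = (j : ℕ) then σ (i : ℕ) else 0) * Vᵀ) :
    let f : Matrix (Fin n₁) (Fin n₂) ℝ → ℝ := fun J =>
      (1 / 2) * (∑ i, ∑ j, (J i j - X i j) ^ 2) + τ * nuclearNorm J
    let Jstar : Matrix (Fin n₁) (Fin n₂) ℝ :=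
      U * (Matrix.of fun (i : Fin n₁) (j : Fin n₂) =>
        if (i : ℕ) = (j : ℕ) then max (σ (i : ℕ) - τ) 0 else 0) * Vᵀ
    (∀ J, f Jstar ≤ f J) ∧ (∀ J, f J = f Jstar → J = Jstar) := by
  intro f Jstar
  set dm : ℕ → ℝ := fun k => max (σ k - τ) 0 with hdm
  have hfval : ∀ J, f J = (1/2) * (∑ i, ∑ j, (J i j - X i j)^2) + τ * nuclearNorm J :=
    fun _ => rfl
  have hXd : X = U * Dmat n₁ n₂ σ * Vᵀ := hX
  have hJstar : Jstar = U * Dmat n₁ n₂ dm * Vᵀ := rfl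
  -- value of f on U * M * Vᵀ
  have hf : ∀ M : Matrix (Fin n₁) (Fin n₂) ℝ,
      f (U * M * Vᵀ) = (1/2) * (∑ i : Fin n₁, ∑ j : Fin n₂,
        (M i j - Dmat n₁ n₂ σ i j)^2) + τ * nuclearNorm M := by
    intro M
    rw [hfval]
    have hmat : U * M * Vᵀ - X = U * (M - Dmat n₁ n₂ σ) * Vᵀ := by
      rw [hXd, Matrix.mul_sub, Matrix.sub_mul]
    have hsum : ∑ i : Fin n₁, ∑ j : Fin n₂, ((U * M * Vᵀ) i j - X i j)^2
        = ∑ i : Fin n₁, ∑ j : Fin n₂, ((U * (M - Dmat n₁ n₂ σ) * Vᵀ) i j)^2 := by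
      apply Finset.sum_congr rfl; intro i _
      apply Finset.sum_congr rfl; intro j _
      rw [← Matrix.sub_apply, hmat]
    rw [hsum, frob_conj U V _ hU hV, nuclearNorm_conj U V M hU hV hV']
    simp only [Matrix.sub_apply]
  have hfJstar : f Jstar = (1/2) * (∑ i : Fin n₁, ∑ j : Fin n₂,
      (Dmat n₁ n₂ dm i j - Dmat n₁ n₂ σ i j)^2) + τ * nuclearNorm (Dmat n₁ n₂ dm) := by
    rw [hJstar, hf]
  -- decomposition of an arbitrary J
  have hdecomp : ∀ J : Matrix (Fin n₁) (Fin n₂) ℝ, J = U * (Uᵀ * J * V) * Vᵀ := by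
    intro J
    have h1 : U * (Uᵀ * J * V) * Vᵀ = (U * Uᵀ) * J * (V * Vᵀ) := by
      simp only [Matrix.mul_assoc]
    rw [h1, hU', hV', Matrix.one_mul, Matrix.mul_one]
  have main : ∀ J : Matrix (Fin n₁) (Fin n₂) ℝ,
      f Jstar + (1/2) * (∑ i : Fin n₁, ∑ j : Fin n₂,
        ((Uᵀ * J * V) i j - Dmat n₁ n₂ dm i j)^2) ≤ f J := by
    intro J
    set M := Uᵀ * J * V with hM
    have hJ : f J = (1/2) * (∑ i : Fin n₁, ∑ j : Fin n₂,
        (M i j - Dmat n₁ n₂ σ i j)^2) + τ * nuclearNorm M := by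
      conv_lhs => rw [hdecomp J]
      rw [hf]
    rw [hJ, hfJstar]
    have := key_ineq M σ hσ τ hτ
    rw [hdm] at *
    linarith [this]
  constructor
  · intro J
    have h1 := main J
    have h2 : 0 ≤ (1/2) * (∑ i : Fin n₁, ∑ j : Fin n₂,
        ((Uᵀ * J * V) i j - Dmat n₁ n₂ dm i j)^2) := by
      apply mul_nonneg (by norm_num)
      apply Finset.sum_nonneg; intro i _
      apply Finset.sum_nonneg; intro j _
      positivity
    exact le_trans (le_add_of_nonneg_right h2) h1
  · intro J hJeq
    have h1 := main J
    rw [hJeq] at h1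
    have h2 : ∑ i : Fin n₁, ∑ j : Fin n₂,
        ((Uᵀ * J * V) i j - Dmat n₁ n₂ dm i j)^2 ≤ 0 := by
      by_contra hcon
      push_neg at hcon
      have : f Jstar < f Jstar + 1 / 2 * ∑ i : Fin n₁, ∑ j : Fin n₂,
          ((Uᵀ * J * V) i j - Dmat n₁ n₂ dm i j)^2 := by
        have : 0 < 1 / 2 * ∑ i : Fin n₁, ∑ j : Fin n₂,
            ((Uᵀ * J * V) i j - Dmat n₁ n₂ dm i j)^2 := by positivity
        linarith
      exact absurd (lt_of_lt_of_le this h1) (lt_irrefl _)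
    have h3 : ∑ i : Fin n₁, ∑ j : Fin n₂,
        ((Uᵀ * J * V) i j - Dmat n₁ n₂ dm i j)^2 = 0 := by
      refine le_antisymm h2 ?_
      apply Finset.sum_nonneg; intro i _
      apply Finset.sum_nonneg; intro j _
      positivity
    have h4 : Uᵀ * J * V = Dmat n₁ n₂ dm := by
      ext i j
      have hi := (Finset.sum_eq_zero_iff_of_nonneg (fun i _ => Finset.sum_nonneg
        fun j _ => sq_nonneg _)).mp h3 i (Finset.mem_univ i)
      have hij := (Finset.sum_eq_zero_iff_of_nonneg
        (fun j _ => sq_nonneg _)).mp hi j (Finset.mem_univ j)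
      have := pow_eq_zero_iff (n := 2) (by norm_num) |>.mp hij
      linarith [this]
    rw [hdecomp J, h4, ← hJstar]
end

section
/- For 0 < p ≤ 1, a scalar x ≥ 0, and τ > 0, the minimizer over σ ≥ 0 of the scalar function f(σ) = (1/2)(σ − x)² + τσ^p is: σ* = 0 if x ≤ ν, and σ* is the larger root of σ + τpσ^{p−1} = x if x > ν, where ν = (2τ(1−p))^{1/(2−p)} + τp(2τ(1−p))^{(p−1)/(2−p)} is the thresholding value. In particular, for p = 1 this reduces to σ* = max(x − τ, 0). -/
open Real

/-- Tangent-line inequality for the convex function `u ^ (p-1)` at `u = 1`. -/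
lemma spp_tangent {p u : ℝ} (hp : 0 < p) (hp1 : p ≤ 1) (hu : 0 < u) :
    2 - p ≤ u ^ (p - 1) + (1 - p) * u := by
  have h2p : (0:ℝ) < 2 - p := by linarith
  have hA : (0:ℝ) ≤ u ^ (p - 1) := (Real.rpow_pos_of_pos hu _).le
  have hgm := Real.geom_mean_le_arith_mean2_weighted
    (show (0:ℝ) ≤ 1 / (2 - p) by positivity)
    (show (0:ℝ) ≤ (1 - p) / (2 - p) from div_nonneg (by linarith) (by linarith))
    hA hu.le (by field_simp; linarith)
  have h1 : (u ^ (p - 1)) ^ (1 / (2 - p)) * u ^ ((1 - p) / (2 - p)) = 1 := by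
    rw [← Real.rpow_mul hu.le, ← Real.rpow_add hu]
    rw [show (p - 1) * (1 / (2 - p)) + (1 - p) / (2 - p) = 0 by field_simp; ring]
    exact Real.rpow_zero u
  rw [h1] at hgm
  have h2 := mul_le_mul_of_nonneg_left hgm h2p.le
  calc 2 - p = (2 - p) * 1 := by ring
    _ ≤ (2 - p) * (1 / (2 - p) * u ^ (p - 1) + (1 - p) / (2 - p) * u) := h2
    _ = u ^ (p - 1) + (1 - p) * u := by field_simp

lemma spp_key2 {p : ℝ} (hp : 0 < p) (hp1 : p ≤ 1) {u : ℝ} (hu : 0 ≤ u) :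
    u * (2 - p - (1 - p) * u) ≤ u ^ p := by
  rcases eq_or_lt_of_le hu with h | h
  · simp [← h, Real.zero_rpow hp.ne']
  · have ht := spp_tangent hp hp1 h
    have hup : u ^ p = u ^ (p - 1) * u := by
      rw [← Real.rpow_add_one h.ne' (p - 1), show p - 1 + 1 = p by ring]
    rw [hup]
    have h3 : 2 - p - (1 - p) * u ≤ u ^ (p - 1) := by linarith
    nlinarith [mul_le_mul_of_nonneg_left h3 h.le]

lemma spp_tangent_gen {p a b : ℝ} (hp : 0 < p) (hp1 : p ≤ 1) (ha : 0 < a) (hb : 0 < b) :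
    a ^ (p - 1) - b ^ (p - 1) ≤ (1 - p) * a ^ (p - 2) * (b - a) := by
  have ht := spp_tangent hp hp1 (div_pos hb ha)
  have hA1 : (0:ℝ) < a ^ (p - 1) := Real.rpow_pos_of_pos ha _
  have hA2 : (0:ℝ) < a ^ (p - 2) := Real.rpow_pos_of_pos ha _
  have hsplit : a ^ (p - 1) = a ^ (p - 2) * a := by
    rw [← Real.rpow_add_one ha.ne' (p - 2), show p - 2 + 1 = p - 1 by ring]
  have hmul : (b / a) ^ (p - 1) * a ^ (p - 1) = b ^ (p - 1) := by
    rw [← Real.mul_rpow (by positivity) ha.le, div_mul_cancel₀ _ ha.ne']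
  have h3 : (1 - p) * (b / a) * a ^ (p - 1) = (1 - p) * b * a ^ (p - 2) := by
    rw [hsplit]; field_simp
  have h2 : (2 - p) * a ^ (p - 1) ≤ b ^ (p - 1) + (1 - p) * b * a ^ (p - 2) := by
    calc (2 - p) * a ^ (p - 1) ≤ ((b / a) ^ (p - 1) + (1 - p) * (b / a)) * a ^ (p - 1) :=
          mul_le_mul_of_nonneg_right ht hA1.le
      _ = (b / a) ^ (p - 1) * a ^ (p - 1) + (1 - p) * (b / a) * a ^ (p - 1) := by ring
      _ = b ^ (p - 1) + (1 - p) * b * a ^ (p - 2) := by rw [hmul, h3]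
  have hsplit2 : p * a ^ (p - 1) = p * (a ^ (p - 2) * a) := by rw [hsplit]
  nlinarith [h2, hsplit, hsplit2]

lemma spp_min {p τ x s : ℝ} (hp : 0 < p) (hp1 : p ≤ 1) (hτ : 0 < τ) (hs : 0 < s)
    (hstar : 2 * τ * (1 - p) * s ^ p ≤ s ^ 2) (hxeq : x = s + τ * p * s ^ (p - 1)) :
    ∀ σ : ℝ, 0 ≤ σ →
      (1 / 2) * (s - x) ^ 2 + τ * s ^ p ≤ (1 / 2) * (σ - x) ^ 2 + τ * σ ^ p := by
  intro σ hσ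
  have hu : (0:ℝ) ≤ σ / s := by positivity
  have hA : (0:ℝ) < s ^ p := Real.rpow_pos_of_pos hs _
  have hB : s ^ (p - 1) * s = s ^ p := by
    rw [← Real.rpow_add_one hs.ne' (p - 1), show p - 1 + 1 = p by ring]
  have hσp : σ ^ p = (σ / s) ^ p * s ^ p := by
    rw [← Real.mul_rpow hu hs.le, div_mul_cancel₀ _ hs.ne']
  set u := σ / s with hudef
  have hσeq : σ = u * s := by rw [hudef]; field_simp
  have hI := spp_key2 hp hp1 hu
  have h1 : (0:ℝ) ≤ (s ^ 2 - 2 * τ * (1 - p) * s ^ p) * (u - 1) ^ 2 :=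
    mul_nonneg (by linarith) (sq_nonneg _)
  have h2 : (0:ℝ) ≤ τ * s ^ p * ((u ^ p - 1 - p * (u - 1)) + (1 - p) * (u - 1) ^ 2) := by
    apply mul_nonneg (by positivity)
    nlinarith [hI]
  have hB2 : τ * p * (s ^ (p - 1) * s) = τ * p * s ^ p := by rw [hB]
  have hB3 : τ * p * u * (s ^ (p - 1) * s) = τ * p * u * s ^ p := by rw [hB]
  rw [hσp, hxeq]
  rw [hσeq]  -- replaces σ in quadratic term? σ no longer appears elsewhere except maybe u
  nlinarith [h1, h2, hB2, hB3]

set_option maxHeartbeats 1600000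



/-- scalar proximal operator of σ ↦ τσ^p (0 < p ≤ 1).
For f(σ) = (1/2)(σ − x)² + τσ^p on σ ≥ 0 and threshold
ν = (2τ(1−p))^{1/(2−p)} + τp(2τ(1−p))^{(p−1)/(2−p)}:
if x ≤ ν then 0 is a global minimizer; if x > ν then the minimizer is the
larger root of σ + τpσ^{p−1} = x. For p = 1 the minimizer is max(x − τ, 0). -/
theorem scalar_prox_power
    (p τ x : ℝ) (hp : 0 < p) (hp1 : p ≤ 1) (hτ : 0 < τ) (hx : 0 ≤ x) :
    let f : ℝ → ℝ := fun σ => (1 / 2) * (σ - x) ^ 2 + τ * σ ^ p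
    let ν : ℝ := (2 * τ * (1 - p)) ^ (1 / (2 - p)) +
      τ * p * (2 * τ * (1 - p)) ^ ((p - 1) / (2 - p))
    (x ≤ ν → ∀ σ : ℝ, 0 ≤ σ → f 0 ≤ f σ) ∧
      (x > ν → ∃ σstar : ℝ, 0 < σstar ∧
        σstar + τ * p * σstar ^ (p - 1) = x ∧
        (∀ σ : ℝ, 0 ≤ σ → f σstar ≤ f σ) ∧
        (∀ σ : ℝ, 0 < σ → σ + τ * p * σ ^ (p - 1) = x → σ ≤ σstar)) ∧
      (p = 1 → ∀ σ : ℝ, 0 ≤ σ → f (max (x - τ) 0) ≤ f σ) := by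
  intro f ν
  have hf : ∀ σ : ℝ, f σ = (1 / 2) * (σ - x) ^ 2 + τ * σ ^ p := fun σ => rfl
  have hν : ν = (2 * τ * (1 - p)) ^ (1 / (2 - p)) +
      τ * p * (2 * τ * (1 - p)) ^ ((p - 1) / (2 - p)) := rfl
  have hzero : (0 : ℝ) ^ p = 0 := Real.zero_rpow hp.ne'
  have h2p : (0 : ℝ) < 2 - p := by linarith
  refine ⟨?_, ?_, ?_⟩
  · -- Part 1
    intro hle σ hσ
    simp only [hf, hzero]
    rcases eq_or_lt_of_le hσ with h | hσ0
    · rw [← h, hzero]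
    rcases eq_or_lt_of_le hp1 with hpe | hpl
    · -- p = 1
      subst hpe
      norm_num [hν] at hle
      rw [Real.rpow_one]
      nlinarith [mul_nonneg hσ (show (0:ℝ) ≤ τ - x by linarith), sq_nonneg σ]
    · -- p < 1
      have hc : (0:ℝ) < 2 * τ * (1 - p) := by nlinarith
      set s0 : ℝ := (2 * τ * (1 - p)) ^ (1 / (2 - p)) with hs0def
      have hs0 : 0 < s0 := Real.rpow_pos_of_pos hc _
      have hs0c : s0 ^ (2 - p) = 2 * τ * (1 - p) := by
        rw [hs0def, ← Real.rpow_mul hc.le,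
          show 1 / (2 - p) * (2 - p) = 1 by field_simp, Real.rpow_one]
      have hB0 : (2 * τ * (1 - p)) ^ ((p - 1) / (2 - p)) = s0 ^ (p - 1) := by
        rw [hs0def, ← Real.rpow_mul hc.le]
        congr 1
        ring
      have hν2 : ν = s0 + τ * p * s0 ^ (p - 1) := by rw [hν, hB0]
      have hA0 : (0:ℝ) < s0 ^ p := Real.rpow_pos_of_pos hs0 _
      have hB0s : s0 ^ (p - 1) * s0 = s0 ^ p := by
        rw [← Real.rpow_add_one hs0.ne' (p - 1), show p - 1 + 1 = p by ring]
      have hs2' : s0 ^ 2 = 2 * τ * (1 - p) * s0 ^ p := by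
        rw [← hs0c, ← Real.rpow_add hs0, show 2 - p + p = (2:ℝ) by ring, Real.rpow_two]
      have hu : (0:ℝ) ≤ σ / s0 := by positivity
      have hσp : σ ^ p = (σ / s0) ^ p * s0 ^ p := by
        rw [← Real.mul_rpow hu hs0.le, div_mul_cancel₀ _ hs0.ne']
      set u := σ / s0 with hudef
      have hσeq : σ = u * s0 := by rw [hudef]; field_simp
      have hI := spp_key2 hp hp1 hu
      have hgap : (0:ℝ) ≤ τ * s0 ^ p * (u ^ p - (2 - p) * u + (1 - p) * u ^ 2) := by
        apply mul_nonneg (by positivity)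
        nlinarith [hI]
      have hxle : x ≤ s0 + τ * p * s0 ^ (p - 1) := by rw [← hν2]; exact hle
      have hxσ := mul_le_mul_of_nonneg_right hxle (show (0:ℝ) ≤ u * s0 by positivity)
      have hs2u : u ^ 2 * s0 ^ 2 = u ^ 2 * (2 * τ * (1 - p) * s0 ^ p) := by rw [hs2']
      have hs2u1 : u * s0 ^ 2 = u * (2 * τ * (1 - p) * s0 ^ p) := by rw [hs2']
      have hB0u : τ * p * u * (s0 ^ (p - 1) * s0) = τ * p * u * s0 ^ p := by rw [hB0s]
      rw [hσp, hσeq]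
      nlinarith [hxσ, hgap, hs2u, hs2u1, hB0u]
  · -- Part 2
    intro hgt
    rcases eq_or_lt_of_le hp1 with hpe | hpl
    · -- p = 1
      subst hpe
      norm_num [hν] at hgt
      have hpos : 0 < x - τ := by linarith
      have hxeq : x = (x - τ) + τ * 1 * (x - τ) ^ ((1:ℝ) - 1) := by
        rw [show (1:ℝ) - 1 = 0 by norm_num, Real.rpow_zero]
        ring
      have hstar : 2 * τ * (1 - 1) * (x - τ) ^ (1:ℝ) ≤ (x - τ) ^ 2 := by
        simp only [sub_self, mul_zero, zero_mul]
        positivity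
      refine ⟨x - τ, hpos, hxeq.symm, ?_, ?_⟩
      · intro σ hσ
        simp only [hf]
        exact spp_min hp le_rfl hτ hpos hstar hxeq σ hσ
      · intro σ hσpos hroot
        rw [show (1:ℝ) - 1 = 0 by norm_num, Real.rpow_zero] at hroot
        linarith
    · -- p < 1
      have hc : (0:ℝ) < 2 * τ * (1 - p) := by nlinarith
      set s0 : ℝ := (2 * τ * (1 - p)) ^ (1 / (2 - p)) with hs0def
      have hs0 : 0 < s0 := Real.rpow_pos_of_pos hc _
      have hs0c : s0 ^ (2 - p) = 2 * τ * (1 - p) := by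
        rw [hs0def, ← Real.rpow_mul hc.le,
          show 1 / (2 - p) * (2 - p) = 1 by field_simp, Real.rpow_one]
      have hB0 : (2 * τ * (1 - p)) ^ ((p - 1) / (2 - p)) = s0 ^ (p - 1) := by
        rw [hs0def, ← Real.rpow_mul hc.le]
        congr 1
        ring
      have hν2 : ν = s0 + τ * p * s0 ^ (p - 1) := by rw [hν, hB0]
      have hB0pos : (0:ℝ) < s0 ^ (p - 1) := Real.rpow_pos_of_pos hs0 _
      have hνpos : 0 < ν := by
        rw [hν2]
        have := mul_pos (mul_pos hτ hp) hB0pos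
        linarith
      have hx0 : 0 < x := lt_trans hνpos hgt
      have hs0x : s0 ≤ x := by
        have h1 : s0 < ν := by
          rw [hν2]
          linarith [mul_pos (mul_pos hτ hp) hB0pos]
        linarith
      have hcont : ContinuousOn (fun σ : ℝ => σ + τ * p * σ ^ (p - 1)) (Set.Icc s0 x) := by
        apply ContinuousOn.add continuousOn_id
        apply ContinuousOn.mul continuousOn_const
        intro y hy
        have hy0 : y ≠ 0 := (lt_of_lt_of_le hs0 hy.1).ne'
        exact (Real.continuousAt_rpow_const y (p - 1) (Or.inl hy0)).continuousWithinAt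
      have hxmem : x ∈ Set.Icc (s0 + τ * p * s0 ^ (p - 1)) (x + τ * p * x ^ (p - 1)) := by
        constructor
        · rw [← hν2]; exact hgt.le
        · have : (0:ℝ) ≤ τ * p * x ^ (p - 1) :=
            (mul_pos (mul_pos hτ hp) (Real.rpow_pos_of_pos hx0 _)).le
          linarith
      obtain ⟨s, hsmem, hgs⟩ := intermediate_value_Icc hs0x hcont hxmem
      have hs : 0 < s := lt_of_lt_of_le hs0 hsmem.1
      have hxeq : x = s + τ * p * s ^ (p - 1) := hgs.symm
      have hcle : 2 * τ * (1 - p) ≤ s ^ (2 - p) := by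
        rw [← hs0c]
        exact Real.rpow_le_rpow hs0.le hsmem.1 h2p.le
      have hss : s ^ (2 - p) * s ^ p = s ^ 2 := by
        rw [← Real.rpow_add hs, show 2 - p + p = (2:ℝ) by ring, Real.rpow_two]
      have hstar : 2 * τ * (1 - p) * s ^ p ≤ s ^ 2 := by
        have := mul_le_mul_of_nonneg_right hcle (Real.rpow_pos_of_pos hs p).le
        linarith [hss ▸ this]
      refine ⟨s, hs, hxeq.symm, ?_, ?_⟩
      · intro σ hσ
        simp only [hf]
        exact spp_min hp hp1 hτ hs hstar hxeq σ hσ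
      · intro σ hσpos hroot
        by_contra hcon
        push_neg at hcon
        have hsub : (0:ℝ) < σ - s := by linarith
        have htg := spp_tangent_gen hp hp1 hs hσpos
        have hq : s ^ (p - 2) * s ^ (2 - p) = 1 := by
          rw [← Real.rpow_add hs, show p - 2 + (2 - p) = (0:ℝ) by ring, Real.rpow_zero]
        have hq2 : p * (σ - s) * (s ^ (p - 2) * s ^ (2 - p)) = p * (σ - s) := by
          rw [hq]; ring
        have hp2pos : (0:ℝ) < s ^ (p - 2) := Real.rpow_pos_of_pos hs _
        have hmul := mul_le_mul_of_nonneg_right hcle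
          (mul_nonneg (mul_nonneg hp.le hsub.le) hp2pos.le)
        have hE : τ * p * (1 - p) * s ^ (p - 2) * (σ - s) ≤ (1 / 2) * (p * (σ - s)) := by
          nlinarith [hmul, hq2]
        have htg2 := mul_le_mul_of_nonneg_left htg
          (show (0:ℝ) ≤ τ * p by positivity)
        have hnp : (0:ℝ) ≤ (1 - p) * (σ - s) := mul_nonneg (by linarith) hsub.le
        nlinarith [htg2, hE, hroot, hxeq, hnp]
  · -- Part 3
    intro hpe σ hσ
    subst hpe
    simp only [hf, Real.rpow_one]
    rcases le_or_gt x τ with h | h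
    · rw [max_eq_right (by linarith : x - τ ≤ 0)]
      nlinarith [mul_nonneg hσ (show (0:ℝ) ≤ τ - x by linarith)]
    · rw [max_eq_left (by linarith : (0:ℝ) ≤ x - τ)]
      nlinarith [sq_nonneg (σ - x + τ)]
end

section
/- For the probability simplex projection, the Lagrange-multiplier equation is solvable: given v ∈ ℝ^M, there exists a unique γ ∈ ℝ such that Σⱼ max(vⱼ + γ, 0) = 1, and the map γ ↦ Σⱼ max(vⱼ + γ, 0) is continuous, nondecreasing, and strictly increasing wherever its value is positive. -/
open Finset

/-- solvability of the simplex-projection Lagrange multiplier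
equation: there is a unique γ with Σⱼ max(vⱼ + γ, 0) = 1, and
γ ↦ Σⱼ max(vⱼ + γ, 0) is continuous, nondecreasing, and strictly increasing
wherever its value is positive. -/
theorem simplex_lagrange_multiplier
    (M : ℕ) (hM : 0 < M) (v : Fin M → ℝ) :
    (∃! γ : ℝ, ∑ j, max (v j + γ) 0 = 1) ∧
      Continuous (fun γ : ℝ => ∑ j, max (v j + γ) 0) ∧
      Monotone (fun γ : ℝ => ∑ j, max (v j + γ) 0) ∧
      ∀ γ₁ γ₂ : ℝ, γ₁ < γ₂ → 0 < ∑ j, max (v j + γ₁) 0 →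
        (∑ j, max (v j + γ₁) 0) < ∑ j, max (v j + γ₂) 0 := by
  set f : ℝ → ℝ := fun γ => ∑ j, max (v j + γ) 0 with hf
  have hcont : Continuous f := by
    apply continuous_finset_sum
    intro j _
    exact (continuous_const.add continuous_id).max continuous_const
  have hmono : Monotone f := by
    intro a b hab
    apply Finset.sum_le_sum
    intro j _
    exact max_le_max (by linarith) le_rfl
  have hstrict : ∀ γ₁ γ₂ : ℝ, γ₁ < γ₂ → 0 < f γ₁ → f γ₁ < f γ₂ := by
    intro γ₁ γ₂ h hpos
    have h0 : (0 : ℝ) = ∑ _j : Fin M, (0 : ℝ) := by simp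
    rw [h0] at hpos
    obtain ⟨j, hj⟩ := Finset.exists_lt_of_sum_lt hpos
    apply Finset.sum_lt_sum
    · intro i _
      exact max_le_max (by linarith) le_rfl
    · refine ⟨j, Finset.mem_univ j, ?_⟩
      have hj' : 0 < v j + γ₁ := by
        rcases lt_max_iff.mp hj.2 with h' | h'
        · exact h'
        · exact absurd h' (lt_irrefl 0)
      calc max (v j + γ₁) 0 = v j + γ₁ := max_eq_left hj'.le
        _ < v j + γ₂ := by linarith
        _ ≤ max (v j + γ₂) 0 := le_max_left _ _
  refine ⟨?_, hcont, hmono, hstrict⟩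
  -- existence
  have i0 : Fin M := ⟨0, hM⟩
  set b : ℝ := 1 - v i0 with hb
  have hfb : 1 ≤ f b := by
    have h1 : max (v i0 + b) 0 ≤ f b := by
      apply Finset.single_le_sum (f := fun j => max (v j + b) 0)
      · intro i _; exact le_max_right _ _
      · exact Finset.mem_univ i0
    have : (1 : ℝ) ≤ max (v i0 + b) 0 := by
      have : v i0 + b = 1 := by rw [hb]; ring
      rw [this]; exact le_max_left _ _
    linarith
  set a : ℝ := min (-(∑ j, |v j|) - 1) b with ha
  have hab : a ≤ b := min_le_right _ _
  have hfa : f a ≤ 1 := by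
    have hzero : f (-(∑ j, |v j|) - 1) = 0 := by
      apply Finset.sum_eq_zero
      intro j _
      have hle : |v j| ≤ ∑ i, |v i| := by
        apply Finset.single_le_sum (f := fun i => |v i|)
        · intro i _; exact abs_nonneg _
        · exact Finset.mem_univ j
      have : v j + (-(∑ j, |v j|) - 1) ≤ 0 := by
        have := le_abs_self (v j); linarith
      exact max_eq_right this
    have := hmono (min_le_left (-(∑ j, |v j|) - 1) b : a ≤ _)
    rw [hzero] at this
    linarith
  have hmem : (1 : ℝ) ∈ Set.Icc (f a) (f b) := ⟨hfa, hfb⟩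
  obtain ⟨γ, _, hγ⟩ := intermediate_value_Icc hab hcont.continuousOn hmem
  refine ⟨γ, hγ, ?_⟩
  intro γ' hγ'0
  have hγ' : f γ' = 1 := hγ'0
  rcases lt_trichotomy γ' γ with h | h | h
  · exfalso
    have := hstrict γ' γ h (by rw [hγ']; norm_num)
    rw [hγ', hγ] at this; exact lt_irrefl _ this
  · exact h
  · exfalso
    have := hstrict γ γ' h (by rw [hγ]; norm_num)
    rw [hγ', hγ] at this; exact lt_irrefl _ this
end
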